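/- arXiv:0903.4218 — 4 statements merged into one kernel-verified Lean document; each statement's English description precedes it below -/
import Mathlib

section
/- For every nonzero $t \in \mathbb{F}_q$ and $E \subseteq \mathbb{F}_q^2$, the sum $\sum_{m \in S_t} |\widehat{E}(m)|^2$ is at most $\sqrt{3}\,|E|^{3/2} q^{-3}$, where $S_t = \{x \in \mathbb{F}_q^2 : x_1^2 + x_2^2 = t\}$. -/
open Finset

private lemma conj_char' {F : Type} [Field F] [Fintype F] (χ : AddChar F ℂ) (a : F) :
    (starRingEnd ℂ) (χ a) = χ (-a) := by
  have hp : 0 < ringChar F := (CharP.char_is_prime F (ringChar F)).pos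
  rw [AddChar.starComp_apply hp, AddChar.inv_apply]

private lemma sumF {F : Type} [Field F] [Fintype F] [DecidableEq F]
    (χ : AddChar F ℂ) (hχ : χ ≠ 1) (b : F) :
    ∑ x : F, χ (x * b) = if b = 0 then (Fintype.card F : ℂ) else 0 :=
  by rw [AddChar.sum_mulShift b (AddChar.IsPrimitive.of_ne_one hχ)]
     split_ifs <;> simp

private lemma orth2 {F : Type} [Field F] [Fintype F] [DecidableEq F]
    (χ : AddChar F ℂ) (hχ : χ ≠ 1) (s : Fin 2 → F) :
    ∑ x : Fin 2 → F, χ (∑ i, x i * s i) =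
      if s = 0 then ((Fintype.card F : ℂ)) ^ 2 else 0 := by
  have key : ∑ x : Fin 2 → F, χ (∑ i, x i * s i)
      = (∑ a : F, χ (a * s 0)) * (∑ b : F, χ (b * s 1)) := by
    rw [Finset.sum_mul_sum]
    rw [← ((piFinTwoEquiv fun _ => F).symm.sum_comp (fun x => χ (∑ i, x i * s i)))]
    rw [Fintype.sum_prod_type]
    refine Finset.sum_congr rfl fun a _ => Finset.sum_congr rfl fun b _ => ?_
    simp [Fin.sum_univ_two, AddChar.map_add_eq_mul]
  rw [key, sumF χ hχ, sumF χ hχ]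
  by_cases h0 : s 0 = 0 <;> by_cases h1 : s 1 = 0
  · have hs : s = 0 := by
      funext i; fin_cases i
      · exact h0
      · exact h1
    simp [hs, h0, h1, sq]
  · have hs : s ≠ 0 := fun h => h1 (by simp [h])
    simp [h0, h1, hs]
  · have hs : s ≠ 0 := fun h => h0 (by simp [h])
    simp [h0, h1, hs]
  · have hs : s ≠ 0 := fun h => h0 (by simp [h])
    simp [h0, h1, hs]

private lemma parseval' {F : Type} [Field F] [Fintype F] [DecidableEq F]
    (χ : AddChar F ℂ) (hχ : χ ≠ 1) (c : (Fin 2 → F) → ℂ) :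
    ∑ x : Fin 2 → F, Complex.normSq (∑ s : Fin 2 → F, c s * χ (∑ i, x i * s i))
      = (Fintype.card F : ℝ) ^ 2 * ∑ s : Fin 2 → F, Complex.normSq (c s) := by
  have hC : ∑ x : Fin 2 → F, ((∑ s : Fin 2 → F, c s * χ (∑ i, x i * s i)) *
      (starRingEnd ℂ) (∑ s : Fin 2 → F, c s * χ (∑ i, x i * s i)))
      = (Fintype.card F : ℂ) ^ 2 * ∑ s : Fin 2 → F, c s * (starRingEnd ℂ) (c s) := by
    have expand : ∀ x : Fin 2 → F, ((∑ s : Fin 2 → F, c s * χ (∑ i, x i * s i)) *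
        (starRingEnd ℂ) (∑ s : Fin 2 → F, c s * χ (∑ i, x i * s i)))
        = ∑ s : Fin 2 → F, ∑ s' : Fin 2 → F,
            (c s * (starRingEnd ℂ) (c s')) * χ (∑ i, x i * (s - s') i) := by
      intro x
      rw [map_sum, Finset.sum_mul_sum]
      refine Finset.sum_congr rfl fun s _ => Finset.sum_congr rfl fun s' _ => ?_
      rw [map_mul, conj_char']
      have hsub : (∑ i, x i * (s - s') i)
          = (∑ i, x i * s i) + (-(∑ i, x i * s' i)) := by
        rw [← Finset.sum_neg_distrib, ← Finset.sum_add_distrib]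
        refine Finset.sum_congr rfl fun i _ => ?_
        simp [mul_sub]
        ring
      rw [hsub, AddChar.map_add_eq_mul]
      ring
    simp_rw [expand]
    rw [Finset.sum_comm]
    have inner : ∀ s : Fin 2 → F,
        (∑ x : Fin 2 → F, ∑ s' : Fin 2 → F,
          (c s * (starRingEnd ℂ) (c s')) * χ (∑ i, x i * (s - s') i))
        = (c s * (starRingEnd ℂ) (c s)) * (Fintype.card F : ℂ) ^ 2 := by
      intro s
      rw [Finset.sum_comm]
      have : ∀ s' : Fin 2 → F,
          (∑ x : Fin 2 → F, (c s * (starRingEnd ℂ) (c s')) * χ (∑ i, x i * (s - s') i))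
          = (c s * (starRingEnd ℂ) (c s')) * (if s - s' = 0 then (Fintype.card F : ℂ) ^ 2 else 0) := by
        intro s'
        rw [← Finset.mul_sum, orth2 χ hχ]
      simp_rw [this, sub_eq_zero, mul_ite, mul_zero]
      simp
    simp_rw [inner]
    rw [← Finset.sum_mul]
    ring
  simp_rw [Complex.mul_conj] at hC
  exact_mod_cast hC


private lemma sq_card' {F : Type} [Field F] [Fintype F] [DecidableEq F] (A : F) :
    (Finset.univ.filter (fun w : F => w ^ 2 = A)).card ≤ 2 := by
  by_contra hcon
  push_neg at hcon
  rw [Finset.two_lt_card_iff] at hcon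
  obtain ⟨a, b, c, ha, hb, hc, hab, hac, hbc⟩ := hcon
  simp only [Finset.mem_filter, Finset.mem_univ, true_and] at ha hb hc
  have key : ∀ x y : F, x ^ 2 = A → y ^ 2 = A → x = y ∨ x = -y := by
    intro x y hx hy
    have h0 : (x - y) * (x + y) = 0 := by linear_combination hx - hy
    rcases mul_eq_zero.mp h0 with h | h
    · exact Or.inl (sub_eq_zero.mp h)
    · exact Or.inr (eq_neg_of_add_eq_zero_left h)
  rcases key a b ha hb with h | h
  · exact hab h
  rcases key a c ha hc with h' | h'
  · exact hac h'
  exact hbc (neg_injective (h.symm.trans h'))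

private lemma pair_card' {F : Type} [Field F] [Fintype F] [DecidableEq F]
    (hchar : ringChar F ≠ 2) {t : F} (ht : t ≠ 0) {s : Fin 2 → F} (hs : s ≠ 0) :
    (((Finset.univ.filter (fun m : Fin 2 → F => ∑ i, m i ^ 2 = t)) ×ˢ
      (Finset.univ.filter (fun m : Fin 2 → F => ∑ i, m i ^ 2 = t))).filter
      (fun p : (Fin 2 → F) × (Fin 2 → F) => p.1 + p.2 = s)).card ≤ 2 := by
  classical
  have h2 : (2 : F) ≠ 0 := Ring.two_ne_zero hchar
  set P := (((Finset.univ.filter (fun m : Fin 2 → F => ∑ i, m i ^ 2 = t)) ×ˢ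
      (Finset.univ.filter (fun m : Fin 2 → F => ∑ i, m i ^ 2 = t))).filter
      (fun p : (Fin 2 → F) × (Fin 2 → F) => p.1 + p.2 = s)) with hP
  have facts : ∀ p ∈ P, (p.1 0 ^ 2 + p.1 1 ^ 2 = t) ∧
      (2 * (s 0 * p.1 0 + s 1 * p.1 1) = s 0 ^ 2 + s 1 ^ 2) ∧ (p.1 + p.2 = s) := by
    intro p hp
    rw [hP, Finset.mem_filter, Finset.mem_product] at hp
    obtain ⟨⟨h1, h2'⟩, h3⟩ := hp
    rw [Finset.mem_filter] at h1 h2'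
    have hm : p.1 0 ^ 2 + p.1 1 ^ 2 = t := by
      have := h1.2; rwa [Fin.sum_univ_two] at this
    have hm' : p.2 0 ^ 2 + p.2 1 ^ 2 = t := by
      have := h2'.2; rwa [Fin.sum_univ_two] at this
    have hadd0 : p.1 0 + p.2 0 = s 0 := by rw [← h3]; rfl
    have hadd1 : p.1 1 + p.2 1 = s 1 := by rw [← h3]; rfl
    have e0 : p.2 0 = s 0 - p.1 0 := by linear_combination hadd0
    have e1 : p.2 1 = s 1 - p.1 1 := by linear_combination hadd1
    rw [e0, e1] at hm'
    exact ⟨hm, by linear_combination hm - hm', h3⟩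
  by_cases hn : s 0 ^ 2 + s 1 ^ 2 = 0
  · have hempty : P = ∅ := by
      rw [Finset.eq_empty_iff_forall_notMem]
      intro p hp
      obtain ⟨hm, hv, -⟩ := facts p hp
      have hv0 : s 0 * p.1 0 + s 1 * p.1 1 = 0 := by
        rcases mul_eq_zero.mp (hv.trans hn) with h | h
        · exact absurd h h2
        · exact h
      have hu0 : s 0 * p.1 1 - s 1 * p.1 0 = 0 := by
        refine sq_eq_zero_iff.mp ?_
        linear_combination (p.1 0 ^ 2 + p.1 1 ^ 2) * hn -
          (s 0 * p.1 0 + s 1 * p.1 1) * hv0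
      have hs0 : s 0 ≠ 0 := by
        intro h
        have h1'' : s 1 = 0 := sq_eq_zero_iff.mp (by linear_combination hn - s 0 * h)
        apply hs; funext i; fin_cases i
        · exact h
        · exact h1''
      apply ht
      have key : (2 * s 0 ^ 2) * t = 0 := by
        linear_combination (s 1 ^ 2 - s 0 ^ 2) * hm +
          (2 * s 1 * p.1 0 + (s 0 * p.1 1 - s 1 * p.1 0)) * hu0 +
          ((s 0 * p.1 0 + s 1 * p.1 1) - 2 * s 1 * p.1 1) * hv0 + t * hn
      rcases mul_eq_zero.mp key with h | h
      · exact absurd h (mul_ne_zero h2 (pow_ne_zero 2 hs0))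
      · exact h
    rw [hempty]
    simp
  · set n := s 0 ^ 2 + s 1 ^ 2 with hndef
    have hmaps : ∀ p ∈ P, (fun p : (Fin 2 → F) × (Fin 2 → F) =>
        s 0 * p.1 1 - s 1 * p.1 0) p ∈
        Finset.univ.filter (fun w : F => w ^ 2 = n * t - (n / 2) ^ 2) := by
      intro p hp
      obtain ⟨hm, hv, -⟩ := facts p hp
      simp only [Finset.mem_filter, Finset.mem_univ, true_and]
      have hv2 : s 0 * p.1 0 + s 1 * p.1 1 = n / 2 := by
        field_simp
        linear_combination hv
      have hid : (s 0 * p.1 1 - s 1 * p.1 0) ^ 2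
          = n * t - (s 0 * p.1 0 + s 1 * p.1 1) ^ 2 := by
        linear_combination n * hm
      rw [hv2] at hid
      exact hid
    have hinj : Set.InjOn (fun p : (Fin 2 → F) × (Fin 2 → F) =>
        s 0 * p.1 1 - s 1 * p.1 0) P := by
      intro p hp p' hp' huv
      simp only at huv
      obtain ⟨hm, hv, h3⟩ := facts p hp
      obtain ⟨hm', hv', h3'⟩ := facts p' hp'
      have hvv : s 0 * p.1 0 + s 1 * p.1 1 = s 0 * p'.1 0 + s 1 * p'.1 1 := by
        have h4 : 2 * ((s 0 * p.1 0 + s 1 * p.1 1) - (s 0 * p'.1 0 + s 1 * p'.1 1)) = 0 := by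
          linear_combination hv - hv'
        rcases mul_eq_zero.mp h4 with h | h
        · exact absurd h h2
        · exact sub_eq_zero.mp h
      have h0 : p.1 0 = p'.1 0 := by
        refine mul_left_cancel₀ hn ?_
        linear_combination s 0 * hvv - s 1 * huv
      have h1 : p.1 1 = p'.1 1 := by
        refine mul_left_cancel₀ hn ?_
        linear_combination s 1 * hvv + s 0 * huv
      have hfst : p.1 = p'.1 := by
        funext i; fin_cases i
        · exact h0
        · exact h1
      have hsnd : p.2 = p'.2 := by
        have e : p.2 = s - p.1 := by rw [← h3]; abel
        have e' : p'.2 = s - p'.1 := by rw [← h3']; abel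
        rw [e, e', hfst]
      exact Prod.ext hfst hsnd
    calc P.card ≤ (Finset.univ.filter (fun w : F => w ^ 2 = n * t - (n / 2) ^ 2)).card :=
          Finset.card_le_card_of_injOn _ hmaps hinj
      _ ≤ 2 := sq_card' _

set_option maxHeartbeats 1000000 in
private lemma key {F : Type} [Field F] [Fintype F] [DecidableEq F]
    (hchar : ringChar F ≠ 2) (χ : AddChar F ℂ) (hχ : χ ≠ 1)
    (E : Finset (Fin 2 → F)) (t : F) (ht : t ≠ 0) :
    ∑ m ∈ Finset.univ.filter (fun m : Fin 2 → F => ∑ i, m i ^ 2 = t),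
      Complex.normSq (∑ x ∈ E, χ (-(∑ i, x i * m i)))
    ≤ Real.sqrt 3 * (E.card : ℝ) ^ ((3 : ℝ) / 2) * (Fintype.card F : ℝ) := by
  classical
  set S : Finset (Fin 2 → F) :=
    Finset.univ.filter (fun m : Fin 2 → F => ∑ i, m i ^ 2 = t) with hS
  set A : (Fin 2 → F) → ℂ := fun m => ∑ x ∈ E, χ (-(∑ i, x i * m i)) with hA
  set T : ℝ := ∑ m ∈ S, Complex.normSq (A m) with hT
  show T ≤ Real.sqrt 3 * (E.card : ℝ) ^ ((3 : ℝ) / 2) * (Fintype.card F : ℝ)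
  have hT0 : 0 ≤ T := Finset.sum_nonneg fun m _ => Complex.normSq_nonneg _
  set G : (Fin 2 → F) → ℂ := fun x => ∑ m ∈ S, A m * χ (∑ i, x i * m i) with hG
  -- step 1 : T = ∑_{x ∈ E} conj (G x)
  have step1 : ((T : ℝ) : ℂ) = ∑ x ∈ E, (starRingEnd ℂ) (G x) := by
    have hconj : ∀ x : Fin 2 → F, (starRingEnd ℂ) (G x)
        = ∑ m ∈ S, (starRingEnd ℂ) (A m) * χ (-(∑ i, x i * m i)) := by
      intro x
      rw [hG]
      rw [map_sum]
      refine Finset.sum_congr rfl fun m _ => ?_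
      rw [map_mul, conj_char']
    simp_rw [hconj]
    rw [Finset.sum_comm, hT]
    push_cast
    refine Finset.sum_congr rfl fun m _ => ?_
    rw [← Finset.mul_sum, Complex.normSq_eq_conj_mul_self]
  -- step 2 : T ≤ ∑_{x ∈ E} |G x|
  have step2 : T ≤ ∑ x ∈ E, ‖G x‖ := by
    calc T = ‖((T : ℝ) : ℂ)‖ := by
            rw [Complex.norm_of_nonneg hT0]
      _ = ‖∑ x ∈ E, (starRingEnd ℂ) (G x)‖ := by rw [step1]
      _ ≤ ∑ x ∈ E, ‖(starRingEnd ℂ) (G x)‖ := norm_sum_le _ _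
      _ = ∑ x ∈ E, ‖G x‖ := by
            refine Finset.sum_congr rfl fun x _ => Complex.norm_conj _
  -- the Fourier coefficients of G²
  set c : (Fin 2 → F) → ℂ := fun s =>
    ∑ p ∈ ((S ×ˢ S).filter (fun p : (Fin 2 → F) × (Fin 2 → F) => p.1 + p.2 = s)),
      A p.1 * A p.2 with hc
  have hGsq : ∀ x : Fin 2 → F, G x ^ 2 = ∑ s : Fin 2 → F, c s * χ (∑ i, x i * s i) := by
    intro x
    rw [hG]
    dsimp only
    rw [sq, Finset.sum_mul_sum]
    have hprod : ∑ m ∈ S, ∑ m' ∈ S,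
        (A m * χ (∑ i, x i * m i)) * (A m' * χ (∑ i, x i * m' i))
        = ∑ p ∈ S ×ˢ S, (A p.1 * A p.2) * χ (∑ i, x i * (p.1 + p.2) i) := by
      rw [Finset.sum_product]
      refine Finset.sum_congr rfl fun m _ => Finset.sum_congr rfl fun m' _ => ?_
      have harg : (∑ i, x i * (m + m') i) = (∑ i, x i * m i) + (∑ i, x i * m' i) := by
        rw [← Finset.sum_add_distrib]
        refine Finset.sum_congr rfl fun i _ => by simp [mul_add]
      rw [harg, AddChar.map_add_eq_mul]
      ring
    rw [hprod]
    rw [← Finset.sum_fiberwise (S ×ˢ S) (fun p => p.1 + p.2)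
      (fun p => (A p.1 * A p.2) * χ (∑ i, x i * (p.1 + p.2) i))]
    refine Finset.sum_congr rfl fun s _ => ?_
    simp only [hc]
    rw [Finset.sum_mul]
    refine Finset.sum_congr rfl fun p hp => ?_
    rw [(Finset.mem_filter.mp hp).2]
  -- A (-m) = conj (A m)
  have hAneg : ∀ m : Fin 2 → F, A (-m) = (starRingEnd ℂ) (A m) := by
    intro m
    rw [hA]
    dsimp only
    rw [map_sum]
    refine Finset.sum_congr rfl fun x _ => ?_
    rw [conj_char']
    congr 1
    simp [mul_neg]
  -- c 0 = T
  have hc0 : c 0 = ((T : ℝ) : ℂ) := by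
    simp only [hc]
    have hbij : ∑ p ∈ ((S ×ˢ S).filter
        (fun p : (Fin 2 → F) × (Fin 2 → F) => p.1 + p.2 = (0 : Fin 2 → F))),
        A p.1 * A p.2 = ∑ m ∈ S, A m * A (-m) := by
      refine Finset.sum_nbij' (fun p => p.1) (fun m => (m, -m)) ?_ ?_ ?_ ?_ ?_
      · intro p hp
        rw [Finset.mem_filter, Finset.mem_product] at hp
        exact hp.1.1
      · intro m hm
        rw [Finset.mem_filter, Finset.mem_product]
        refine ⟨⟨hm, ?_⟩, by funext i; simp⟩
        rw [hS, Finset.mem_filter] at hm ⊢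
        refine ⟨Finset.mem_univ _, ?_⟩
        rw [← hm.2]
        refine Finset.sum_congr rfl fun i _ => by simp
      · intro p hp
        rw [Finset.mem_filter] at hp
        have : p.2 = -p.1 := by
          have := hp.2
          funext i
          have hz := congrFun this i
          simp only [Pi.add_apply, Pi.zero_apply] at hz
          simp [eq_neg_of_add_eq_zero_right hz]
        show ((fun p : (Fin 2 → F) × (Fin 2 → F) => p.1) p, -(fun p : (Fin 2 → F) × (Fin 2 → F) => p.1) p) = p
        simp only
        rw [← this]
      · intro m hm
        rfl
      · intro p hp
        rw [Finset.mem_filter] at hp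
        have h2 : p.2 = -p.1 := by
          funext i
          have hz := congrFun hp.2 i
          simp only [Pi.add_apply, Pi.zero_apply] at hz
          simp [eq_neg_of_add_eq_zero_right hz]
        show A p.1 * A p.2 = A p.1 * A (-p.1)
        rw [h2]
    rw [hbij, hT]
    push_cast
    refine Finset.sum_congr rfl fun m _ => ?_
    rw [hAneg m, Complex.mul_conj]
  -- bound on normSq (c s) for s ≠ 0
  have hrest : ∀ s : Fin 2 → F, s ≠ 0 → Complex.normSq (c s) ≤
      2 * ∑ p ∈ ((S ×ˢ S).filter
        (fun p : (Fin 2 → F) × (Fin 2 → F) => p.1 + p.2 = s)),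
        Complex.normSq (A p.1 * A p.2) := by
    intro s hs0
    have hcard : (((S ×ˢ S).filter
        (fun p : (Fin 2 → F) × (Fin 2 → F) => p.1 + p.2 = s)).card : ℝ) ≤ 2 := by
      have := pair_card' hchar ht hs0 (F := F)
      rw [← hS] at this
      exact_mod_cast this
    calc Complex.normSq (c s) = ‖c s‖ ^ 2 := (Complex.sq_norm _).symm
      _ ≤ (∑ p ∈ ((S ×ˢ S).filter
            (fun p : (Fin 2 → F) × (Fin 2 → F) => p.1 + p.2 = s)),
            ‖A p.1 * A p.2‖) ^ 2 := by
          have habs : ‖c s‖ ≤ ∑ p ∈ ((S ×ˢ S).filter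
              (fun p : (Fin 2 → F) × (Fin 2 → F) => p.1 + p.2 = s)),
              ‖A p.1 * A p.2‖ := by
            simp only [hc]
            exact norm_sum_le _ _
          exact pow_le_pow_left₀ (norm_nonneg _) habs 2
      _ ≤ (((S ×ˢ S).filter
            (fun p : (Fin 2 → F) × (Fin 2 → F) => p.1 + p.2 = s)).card : ℝ) *
            ∑ p ∈ ((S ×ˢ S).filter
            (fun p : (Fin 2 → F) × (Fin 2 → F) => p.1 + p.2 = s)),
            ‖A p.1 * A p.2‖ ^ 2 := by
          exact sq_sum_le_card_mul_sum_sq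
      _ ≤ 2 * ∑ p ∈ ((S ×ˢ S).filter
            (fun p : (Fin 2 → F) × (Fin 2 → F) => p.1 + p.2 = s)),
            Complex.normSq (A p.1 * A p.2) := by
          simp_rw [Complex.sq_norm]
          refine mul_le_mul_of_nonneg_right hcard ?_
          exact Finset.sum_nonneg fun p _ => Complex.normSq_nonneg _
  -- step 5
  have step5 : ∑ x : Fin 2 → F, ‖G x‖ ^ 4
      ≤ 3 * (Fintype.card F : ℝ) ^ 2 * T ^ 2 := by
    have h1 : ∀ x : Fin 2 → F, ‖G x‖ ^ 4 = Complex.normSq (G x ^ 2) := by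
      intro x
      rw [← Complex.sq_norm, norm_pow]
      ring
    simp_rw [h1, hGsq]
    rw [parseval' χ hχ c]
    have main : ∑ s : Fin 2 → F, Complex.normSq (c s) ≤ 3 * T ^ 2 := by
      have hsplit : ∑ s : Fin 2 → F, Complex.normSq (c s)
          = Complex.normSq (c 0) +
            ∑ s ∈ Finset.univ.erase (0 : Fin 2 → F), Complex.normSq (c s) :=
        (Finset.add_sum_erase _ _ (Finset.mem_univ 0)).symm
      have hc0' : Complex.normSq (c 0) = T ^ 2 := by
        rw [hc0, Complex.normSq_ofReal]
        ring
      have htail : ∑ s ∈ Finset.univ.erase (0 : Fin 2 → F), Complex.normSq (c s)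
          ≤ 2 * T ^ 2 := by
        have hTsq : ∑ s : Fin 2 → F, ∑ p ∈ ((S ×ˢ S).filter
            (fun p : (Fin 2 → F) × (Fin 2 → F) => p.1 + p.2 = s)),
            Complex.normSq (A p.1 * A p.2) = T ^ 2 := by
          rw [Finset.sum_fiberwise (S ×ˢ S) (fun p => p.1 + p.2)
            (fun p => Complex.normSq (A p.1 * A p.2))]
          rw [hT, sq, Finset.sum_mul_sum, Finset.sum_product]
          refine Finset.sum_congr rfl fun m _ => Finset.sum_congr rfl fun m' _ => ?_
          exact Complex.normSq_mul _ _
        calc ∑ s ∈ Finset.univ.erase (0 : Fin 2 → F), Complex.normSq (c s)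
            ≤ ∑ s ∈ Finset.univ.erase (0 : Fin 2 → F),
                2 * ∑ p ∈ ((S ×ˢ S).filter
                (fun p : (Fin 2 → F) × (Fin 2 → F) => p.1 + p.2 = s)),
                Complex.normSq (A p.1 * A p.2) :=
              Finset.sum_le_sum fun s hs => hrest s (Finset.ne_of_mem_erase hs)
          _ = 2 * ∑ s ∈ Finset.univ.erase (0 : Fin 2 → F),
                ∑ p ∈ ((S ×ˢ S).filter
                (fun p : (Fin 2 → F) × (Fin 2 → F) => p.1 + p.2 = s)),
                Complex.normSq (A p.1 * A p.2) := by
              rw [Finset.mul_sum]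
          _ ≤ 2 * ∑ s : Fin 2 → F,
                ∑ p ∈ ((S ×ˢ S).filter
                (fun p : (Fin 2 → F) × (Fin 2 → F) => p.1 + p.2 = s)),
                Complex.normSq (A p.1 * A p.2) := by
              refine mul_le_mul_of_nonneg_left ?_ (by norm_num)
              refine Finset.sum_le_sum_of_subset_of_nonneg
                (Finset.subset_univ _) fun s _ _ => ?_
              exact Finset.sum_nonneg fun p _ => Complex.normSq_nonneg _
          _ = 2 * T ^ 2 := by rw [hTsq]
      rw [hsplit, hc0']
      linarith
    calc (Fintype.card F : ℝ) ^ 2 * ∑ s : Fin 2 → F, Complex.normSq (c s)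
        ≤ (Fintype.card F : ℝ) ^ 2 * (3 * T ^ 2) := by
          exact mul_le_mul_of_nonneg_left main (by positivity)
      _ = 3 * (Fintype.card F : ℝ) ^ 2 * T ^ 2 := by ring
  -- steps 3-4
  have step34 : (∑ x ∈ E, ‖G x‖) ^ 4
      ≤ (E.card : ℝ) ^ 3 * ∑ x : Fin 2 → F, ‖G x‖ ^ 4 := by
    have s3 : (∑ x ∈ E, ‖G x‖) ^ 2
        ≤ (E.card : ℝ) * ∑ x ∈ E, ‖G x‖ ^ 2 := by
      exact sq_sum_le_card_mul_sum_sq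
    have s4 : (∑ x ∈ E, ‖G x‖ ^ 2) ^ 2
        ≤ (E.card : ℝ) * ∑ x : Fin 2 → F, ‖G x‖ ^ 4 := by
      calc (∑ x ∈ E, ‖G x‖ ^ 2) ^ 2
          ≤ (E.card : ℝ) * ∑ x ∈ E, (‖G x‖ ^ 2) ^ 2 := by
            exact sq_sum_le_card_mul_sum_sq
        _ = (E.card : ℝ) * ∑ x ∈ E, ‖G x‖ ^ 4 := by
            refine congrArg _ (Finset.sum_congr rfl fun x _ => by ring)
        _ ≤ (E.card : ℝ) * ∑ x : Fin 2 → F, ‖G x‖ ^ 4 := by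
            refine mul_le_mul_of_nonneg_left ?_ (by positivity)
            refine Finset.sum_le_sum_of_subset_of_nonneg
              (Finset.subset_univ _) fun x _ _ => by positivity
    calc (∑ x ∈ E, ‖G x‖) ^ 4
        = ((∑ x ∈ E, ‖G x‖) ^ 2) ^ 2 := by ring
      _ ≤ ((E.card : ℝ) * ∑ x ∈ E, ‖G x‖ ^ 2) ^ 2 := by
          refine pow_le_pow_left₀ (by positivity) s3 2
      _ = (E.card : ℝ) ^ 2 * (∑ x ∈ E, ‖G x‖ ^ 2) ^ 2 := by ring
      _ ≤ (E.card : ℝ) ^ 2 * ((E.card : ℝ) * ∑ x : Fin 2 → F, ‖G x‖ ^ 4) := by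
          exact mul_le_mul_of_nonneg_left s4 (by positivity)
      _ = (E.card : ℝ) ^ 3 * ∑ x : Fin 2 → F, ‖G x‖ ^ 4 := by ring
  -- combine
  have hT4 : T ^ 4 ≤ 3 * (E.card : ℝ) ^ 3 * (Fintype.card F : ℝ) ^ 2 * T ^ 2 := by
    calc T ^ 4 ≤ (∑ x ∈ E, ‖G x‖) ^ 4 := pow_le_pow_left₀ hT0 step2 4
      _ ≤ (E.card : ℝ) ^ 3 * ∑ x : Fin 2 → F, ‖G x‖ ^ 4 := step34
      _ ≤ (E.card : ℝ) ^ 3 * (3 * (Fintype.card F : ℝ) ^ 2 * T ^ 2) :=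
          mul_le_mul_of_nonneg_left step5 (by positivity)
      _ = 3 * (E.card : ℝ) ^ 3 * (Fintype.card F : ℝ) ^ 2 * T ^ 2 := by ring
  rcases eq_or_lt_of_le hT0 with h0 | hTpos
  · rw [← h0]
    positivity
  · have hsq : T ^ 2 ≤ 3 * (E.card : ℝ) ^ 3 * (Fintype.card F : ℝ) ^ 2 := by
      have hp : (0 : ℝ) < T ^ 2 := pow_pos hTpos 2
      refine le_of_mul_le_mul_right ?_ hp
      calc T ^ 2 * T ^ 2 = T ^ 4 := by ring
        _ ≤ 3 * (E.card : ℝ) ^ 3 * (Fintype.card F : ℝ) ^ 2 * T ^ 2 := hT4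
    have hle : T ≤ Real.sqrt (3 * (E.card : ℝ) ^ 3 * (Fintype.card F : ℝ) ^ 2) := by
      rw [← Real.sqrt_sq hT0]
      exact Real.sqrt_le_sqrt hsq
    refine hle.trans_eq ?_
    rw [Real.sqrt_mul (by positivity), Real.sqrt_mul (by positivity)]
    rw [Real.sqrt_sq (by positivity)]
    congr 1
    congr 1
    rw [Real.sqrt_eq_rpow, ← Real.rpow_natCast ((E.card : ℝ)) 3,
      ← Real.rpow_mul (by positivity)]
    norm_num

/-- For every nonzero `t` and `E ⊆ 𝔽_q²`, the sum over the circle `S_t` of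
`|Ê(m)|²` is at most `√3 |E|^{3/2} q^{-3}`, where
`Ê(m) = q^{-2} ∑_{x ∈ E} χ(-x·m)` for a nontrivial additive character `χ`. -/
theorem stmt_0 (F : Type) [Field F] [Fintype F] [DecidableEq F]
    (hchar : ringChar F ≠ 2)
    (χ : AddChar F ℂ) (hχ : χ ≠ 1)
    (E : Finset (Fin 2 → F)) (t : F) (ht : t ≠ 0) :
    ∑ m ∈ Finset.univ.filter (fun m : Fin 2 → F => ∑ i, m i ^ 2 = t),
        ‖(Fintype.card F : ℂ)⁻¹ ^ 2 * ∑ x ∈ E, χ (-(∑ i, x i * m i))‖ ^ 2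
      ≤ Real.sqrt 3 * (E.card : ℝ) ^ ((3 : ℝ) / 2) / (Fintype.card F : ℝ) ^ 3 := by
  classical
  have hq : (0 : ℝ) < (Fintype.card F : ℝ) := by
    exact_mod_cast Fintype.card_pos
  have hq0 : (Fintype.card F : ℝ) ≠ 0 := ne_of_gt hq
  have hLHS : ∑ m ∈ Finset.univ.filter (fun m : Fin 2 → F => ∑ i, m i ^ 2 = t),
      ‖(Fintype.card F : ℂ)⁻¹ ^ 2 * ∑ x ∈ E, χ (-(∑ i, x i * m i))‖ ^ 2
      = (∑ m ∈ Finset.univ.filter (fun m : Fin 2 → F => ∑ i, m i ^ 2 = t),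
          Complex.normSq (∑ x ∈ E, χ (-(∑ i, x i * m i)))) / (Fintype.card F : ℝ) ^ 4 := by
    rw [Finset.sum_div]
    refine Finset.sum_congr rfl fun m _ => ?_
    rw [norm_mul, mul_pow]
    simp only [Complex.sq_norm]
    simp only [map_pow, map_inv₀, Complex.normSq_natCast]
    rw [eq_div_iff (pow_ne_zero 4 hq0), mul_right_comm, inv_pow,
      show ((Fintype.card F : ℝ) * (Fintype.card F : ℝ)) ^ 2 = (Fintype.card F : ℝ) ^ 4 from by ring,
      inv_mul_cancel₀ (pow_ne_zero 4 hq0), one_mul]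
  rw [hLHS]
  calc (∑ m ∈ Finset.univ.filter (fun m : Fin 2 → F => ∑ i, m i ^ 2 = t),
          Complex.normSq (∑ x ∈ E, χ (-(∑ i, x i * m i)))) / (Fintype.card F : ℝ) ^ 4
      ≤ (Real.sqrt 3 * (E.card : ℝ) ^ ((3 : ℝ) / 2) * (Fintype.card F : ℝ)) /
          (Fintype.card F : ℝ) ^ 4 := by
        gcongr
        exact key hchar χ hχ E t ht
    _ = Real.sqrt 3 * (E.card : ℝ) ^ ((3 : ℝ) / 2) / (Fintype.card F : ℝ) ^ 3 := by
        field_simp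
end

section
/- Let $E \subseteq \mathbb{F}_q^d$ with $|E| \geq q^{(d+1)/2}$. Then there exists a subset $E' \subseteq E$ with $|E'| \gtrsim |E|$ such that for every $y \in E'$ the pinned dot product set $\Pi_y(E) = \{x \cdot y : x \in E\}$ satisfies $|\Pi_y(E)| > q/2$. -/
open Finset

set_option linter.unusedSectionVars false
set_option linter.unusedVariables false
set_option maxHeartbeats 1000000

namespace PinnedAux

variable {F : Type} [Field F] [Fintype F] [DecidableEq F] {d : ℕ}

def dot (x y : Fin d → F) : F := ∑ i, x i * y i

lemma dot_comm (x y : Fin d → F) : dot x y = dot y x :=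
  Finset.sum_congr rfl fun i _ => mul_comm _ _

lemma dot_add_left (a b y : Fin d → F) : dot (a + b) y = dot a y + dot b y := by
  simp [dot, add_mul, Finset.sum_add_distrib]

lemma dot_add_right (a b y : Fin d → F) : dot y (a + b) = dot y a + dot y b := by
  simp [dot, mul_add, Finset.sum_add_distrib]

lemma dot_smul_left (s : F) (x y : Fin d → F) : dot (s • x) y = s * dot x y := by
  simp [dot, Finset.mul_sum, mul_assoc]

lemma dot_smul_right (s : F) (x y : Fin d → F) : dot x (s • y) = s * dot x y := by
  simp only [dot, Finset.mul_sum, Pi.smul_apply, smul_eq_mul]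
  exact Finset.sum_congr rfl fun i _ => by ring

lemma dot_sub_left (a b y : Fin d → F) : dot (a - b) y = dot a y - dot b y := by
  simp [dot, sub_mul, Finset.sum_sub_distrib]

lemma dot_zero_right (x : Fin d → F) : dot x 0 = 0 := by simp [dot]

lemma dot_single_right (x : Fin d → F) (i : Fin d) : dot x (Pi.single i 1) = x i := by
  simp [dot, Pi.single_apply]

/-- the dot product bilinear form -/
def Bf : LinearMap.BilinForm F (Fin d → F) :=
  LinearMap.mk₂ F dot dot_add_left dot_smul_left
    (fun x a b => dot_add_right a b x) (fun s x y => by simpa using dot_smul_right s x y)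

@[simp] lemma Bf_apply (x y : Fin d → F) : Bf x y = dot x y := rfl

lemma Bf_refl : (Bf (F := F) (d := d)).IsRefl := by
  intro x y h
  simpa [dot_comm x y] using h

lemma Bf_nondeg : (Bf (F := F) (d := d)).Nondegenerate := by
  refine (LinearMap.IsRefl.nondegenerate_iff_separatingLeft (B := Bf (F := F) (d := d)) (fun x y h => Bf_refl x y h)).mpr ?_
  intro m h
  funext i
  have := h (Pi.single i 1)
  rw [Bf_apply, dot_single_right] at this
  simpa using this

/-- Cardinality of the hyperplane through the origin orthogonal to `z ≠ 0`. -/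
lemma ker_card (z : Fin d → F) (hz : z ≠ 0) :
    (Finset.univ.filter (fun y => dot z y = 0)).card * Fintype.card F
      = Fintype.card F ^ d := by
  classical
  set f : (Fin d → F) →ₗ[F] F := Bf z with hf
  have hfne : f ≠ 0 := by
    intro h0
    apply hz
    apply Bf_nondeg.1
    intro n
    rw [show Bf z n = f n from rfl, h0]
    rfl
  have hsurj : Function.Surjective f := by
    obtain ⟨y₀, hy₀⟩ : ∃ y₀, f y₀ ≠ 0 := by
      by_contra h
      push_neg at h
      exact hfne (LinearMap.ext fun y => by simp [h y])
    intro c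
    refine ⟨(c * (f y₀)⁻¹) • y₀, ?_⟩
    rw [map_smul, smul_eq_mul, mul_assoc, inv_mul_cancel₀ hy₀, mul_one]
  have hrange : LinearMap.range f = ⊤ := LinearMap.range_eq_top_of_surjective f hsurj
  have hrk : Module.finrank F (LinearMap.range f) + Module.finrank F (LinearMap.ker f)
      = d := by
    rw [LinearMap.finrank_range_add_finrank_ker f, Module.finrank_fin_fun]
  rw [hrange, finrank_top, Module.finrank_self] at hrk
  haveI : DecidablePred (· ∈ LinearMap.ker f) := fun y =>
    decidable_of_iff (f y = 0) (LinearMap.mem_ker).symm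
  have hcard : (Finset.univ.filter (fun y => dot z y = 0)).card
      = Fintype.card (LinearMap.ker f) := by
    rw [← Fintype.card_subtype]
    apply Fintype.card_congr
    exact Equiv.subtypeEquivRight (fun y => by
      rw [LinearMap.mem_ker]
      exact Iff.rfl)
  rw [hcard, Module.card_eq_pow_finrank (K := F) (V := LinearMap.ker f), ← pow_succ]
  congr 1
  omega

lemma isotropic_card (S : Finset (Fin d → F)) (h : ∀ x ∈ S, ∀ y ∈ S, dot x y = 0) :
    S.card ^ 2 * Fintype.card F ≤ (Fintype.card F) ^ (d + 1) := by
  classical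
  set W := Submodule.span F (S : Set (Fin d → F)) with hW
  have hWorth : W ≤ Bf.orthogonal W := by
    rw [hW]
    apply Submodule.span_le.mpr
    intro a ha
    rw [SetLike.mem_coe, LinearMap.BilinForm.mem_orthogonal_iff]
    intro n hn
    induction hn using Submodule.span_induction with
    | mem x hx => exact h x hx a ha
    | zero => simp
    | add x y _ _ hx hy => rw [map_add, LinearMap.add_apply, hx, hy, add_zero]
    | smul c x _ hx => rw [map_smul, LinearMap.smul_apply, hx, smul_zero]
  have horth : Module.finrank F (Bf.orthogonal W)
      = Module.finrank F (Fin d → F) - Module.finrank F W :=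
    LinearMap.BilinForm.finrank_orthogonal Bf_nondeg W
  have hfr : Module.finrank F W ≤ Module.finrank F (Bf.orthogonal W) :=
    Submodule.finrank_mono hWorth
  have hle : Module.finrank F W ≤ d := by
    have := Submodule.finrank_le W
    rwa [Module.finrank_fin_fun] at this
  have h2r : 2 * Module.finrank F W ≤ d := by
    rw [horth, Module.finrank_fin_fun] at hfr
    omega
  have hcardW : Fintype.card W = Fintype.card F ^ (Module.finrank F W) :=
    Module.card_eq_pow_finrank
  have hsub2 : S ⊆ Set.toFinset (W : Set (Fin d → F)) := fun x hx =>
    Set.mem_toFinset.mpr (Submodule.subset_span hx)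
  have hcards : S.card ≤ Fintype.card W := by
    calc S.card ≤ (Set.toFinset (W : Set (Fin d → F))).card := Finset.card_le_card hsub2
      _ = Fintype.card W := by
          rw [Set.toFinset_card]
          exact Fintype.card_congr (Equiv.refl _)
  have hq1 : 1 ≤ Fintype.card F := Fintype.card_pos
  calc S.card ^ 2 * Fintype.card F
      ≤ (Fintype.card F ^ (Module.finrank F W)) ^ 2 * Fintype.card F := by
        have := Nat.pow_le_pow_left (hcards.trans_eq hcardW) 2
        exact Nat.mul_le_mul_right _ this
    _ = Fintype.card F ^ (2 * Module.finrank F W + 1) := by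
        rw [← pow_mul, ← pow_succ]
        ring_nf
    _ ≤ Fintype.card F ^ (d + 1) := Nat.pow_le_pow_right hq1 (by omega)

variable (E : Finset (Fin d → F))

def nu (y : Fin d → F) : ℕ := ((E ×ˢ E).filter (fun p => dot p.1 y = dot p.2 y)).card
def piy (y : Fin d → F) : Finset F := E.image (fun x => dot x y)
def rfib (y : Fin d → F) (t : F) : ℕ := (E.filter (fun x => dot x y = t)).card

lemma card_eq_sum_rfib (y : Fin d → F) (s : Finset F) (h : ∀ x ∈ E, dot x y ∈ s) :
    E.card = ∑ t ∈ s, rfib E y t :=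
  Finset.card_eq_sum_card_fiberwise h

lemma nu_eq_sum_sq (y : Fin d → F) (s : Finset F) (h : ∀ x ∈ E, dot x y ∈ s) :
    nu E y = ∑ t ∈ s, (rfib E y t) ^ 2 := by
  have h2 : ∀ p ∈ (E ×ˢ E).filter (fun p => dot p.1 y = dot p.2 y), dot p.1 y ∈ s :=
    fun p hp => h p.1 (Finset.mem_product.mp (Finset.mem_filter.mp hp).1).1
  rw [nu, Finset.card_eq_sum_card_fiberwise h2]
  refine Finset.sum_congr rfl fun t ht => ?_
  have : ((E ×ˢ E).filter (fun p => dot p.1 y = dot p.2 y)).filter (fun p => dot p.1 y = t)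
      = (E.filter (fun x => dot x y = t)) ×ˢ (E.filter (fun x => dot x y = t)) := by
    ext ⟨a, b⟩
    simp only [Finset.mem_filter, Finset.mem_product]
    constructor
    · rintro ⟨⟨⟨ha, hb⟩, heq⟩, hts⟩
      exact ⟨⟨ha, hts⟩, hb, heq ▸ hts⟩
    · rintro ⟨⟨ha, hta⟩, hb, htb⟩
      exact ⟨⟨⟨ha, hb⟩, hta.trans htb.symm⟩, hta⟩
  rw [this, Finset.card_product, rfib, sq]

lemma cs_general (y : Fin d → F) (s : Finset F) (h : ∀ x ∈ E, dot x y ∈ s) :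
    E.card ^ 2 ≤ s.card * nu E y := by
  rw [card_eq_sum_rfib E y s h, nu_eq_sum_sq E y s h]
  exact sq_sum_le_card_mul_sum_sq

lemma cs_univ (y : Fin d → F) : E.card ^ 2 ≤ Fintype.card F * nu E y := by
  simpa using cs_general E y Finset.univ (fun x _ => Finset.mem_univ _)

lemma cs_pi (y : Fin d → F) : E.card ^ 2 ≤ (piy E y).card * nu E y :=
  cs_general E y (piy E y) (fun x hx => Finset.mem_image_of_mem _ hx)

lemma bad_nu (y : Fin d → F) (hbad : ¬ (Fintype.card F < 2 * (piy E y).card)) :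
    2 * E.card ^ 2 ≤ Fintype.card F * nu E y := by
  push_neg at hbad
  calc 2 * E.card ^ 2 ≤ 2 * ((piy E y).card * nu E y) := by
        exact Nat.mul_le_mul_left _ (cs_pi E y)
    _ = (2 * (piy E y).card) * nu E y := by ring
    _ ≤ Fintype.card F * nu E y := Nat.mul_le_mul_right _ hbad

lemma nu_zero : nu E 0 = E.card ^ 2 := by
  rw [nu]
  have : ((E ×ˢ E).filter (fun p => dot p.1 (0 : Fin d → F) = dot p.2 0)) = E ×ˢ E := by
    apply Finset.filter_true_of_mem
    intro p _
    simp [dot_zero_right]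
  rw [this, Finset.card_product, sq]

lemma nu_smul (y : Fin d → F) (s : F) (hs : s ≠ 0) : nu E (s • y) = nu E y := by
  unfold nu
  congr 1
  apply Finset.filter_congr
  intro p _
  simp only [dot_smul_right]
  exact ⟨fun h => mul_left_cancel₀ hs h, fun h => by rw [h]⟩

lemma sum_nu :
    Fintype.card F * (∑ y : Fin d → F, nu E y) + (Fintype.card F)^d * E.card
      = (Fintype.card F)^(d+1) * E.card + (Fintype.card F)^d * E.card ^ 2 := by
  have hswap : (∑ y : Fin d → F, nu E y)
      = ∑ p ∈ E ×ˢ E, (univ.filter (fun y => dot p.1 y = dot p.2 y)).card := by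
    simp only [nu, Finset.card_filter]
    rw [Finset.sum_comm]
  have hpoint : ∀ p : (Fin d → F) × (Fin d → F),
      Fintype.card F * (univ.filter (fun y => dot p.1 y = dot p.2 y)).card
        = if p.1 = p.2 then (Fintype.card F)^(d+1) else (Fintype.card F)^d := by
    intro p
    by_cases h : p.1 = p.2
    · rw [if_pos h, h]
      have h1 : (univ.filter (fun y : Fin d → F => dot p.2 y = dot p.2 y)) = univ :=
        Finset.filter_true_of_mem (fun _ _ => rfl)
      rw [h1, Finset.card_univ]
      have : Fintype.card (Fin d → F) = Fintype.card F ^ d := by simp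
      rw [this, ← pow_succ']
    · rw [if_neg h]
      have hz : p.1 - p.2 ≠ 0 := sub_ne_zero.mpr h
      have h2 : (univ.filter (fun y => dot p.1 y = dot p.2 y))
          = (univ.filter (fun y => dot (p.1 - p.2) y = 0)) := by
        apply Finset.filter_congr
        intro y _
        simp [dot_sub_left, sub_eq_zero]
      rw [h2, mul_comm, ker_card _ hz]
  have hdiag : ((E ×ˢ E).filter (fun p => p.1 = p.2)).card = E.card := by
    have h3 : (E ×ˢ E).filter (fun p => p.1 = p.2) = E.image (fun x => (x, x)) := by
      ext ⟨a, b⟩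
      simp only [Finset.mem_filter, Finset.mem_product, Finset.mem_image, Prod.mk.injEq]
      constructor
      · rintro ⟨⟨ha, hb⟩, h⟩
        exact ⟨a, ha, rfl, h⟩
      · rintro ⟨x, hx, rfl, rfl⟩
        exact ⟨⟨hx, hx⟩, rfl⟩
    rw [h3, Finset.card_image_of_injective _ (fun a b hab => (Prod.mk.injEq _ _ _ _ ▸ hab).1)]
  have hsplit : ((E ×ˢ E).filter (fun p => p.1 = p.2)).card
      + ((E ×ˢ E).filter (fun p => ¬ p.1 = p.2)).card = E.card ^ 2 := by
    rw [Finset.card_filter_add_card_filter_not, Finset.card_product, sq]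
  have hmain : Fintype.card F * (∑ y : Fin d → F, nu E y)
      = (Fintype.card F)^(d+1) * ((E ×ˢ E).filter (fun p => p.1 = p.2)).card
        + (Fintype.card F)^d * ((E ×ˢ E).filter (fun p => ¬ p.1 = p.2)).card := by
    rw [hswap, Finset.mul_sum]
    rw [Finset.sum_congr rfl (fun p _ => hpoint p), Finset.sum_ite]
    simp [Finset.sum_const, mul_comm]
  rw [hmain, hdiag]
  set O := ((E ×ˢ E).filter (fun p => ¬ p.1 = p.2)).card with hO
  rw [hdiag] at hsplit
  calc (Fintype.card F)^(d+1) * E.card + (Fintype.card F)^d * O + (Fintype.card F)^d * E.card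
      = (Fintype.card F)^(d+1) * E.card + (Fintype.card F)^d * (E.card + O) := by ring
    _ = (Fintype.card F)^(d+1) * E.card + (Fintype.card F)^d * E.card ^ 2 := by
        rw [hsplit]

lemma markov_core (S : Finset (Fin d → F)) (w : (Fin d → F) → ℕ)
    (hS : ∀ y ∈ S, w y ≤ Fintype.card F * nu E y) :
    ∑ y ∈ S, w y + E.card^2 * (univ \ S).card + (Fintype.card F)^d * E.card
      ≤ (Fintype.card F)^(d+1) * E.card + (Fintype.card F)^d * E.card^2 := by
  have hsum := sum_nu E
  have hsub : S ⊆ univ := Finset.subset_univ S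
  have hsplit : ∑ y ∈ univ \ S, (Fintype.card F * nu E y) + ∑ y ∈ S, (Fintype.card F * nu E y)
      = ∑ y ∈ univ, (Fintype.card F * nu E y) := Finset.sum_sdiff hsub
  have h1 : ∑ y ∈ S, w y ≤ ∑ y ∈ S, (Fintype.card F * nu E y) := Finset.sum_le_sum hS
  have h2 : E.card^2 * (univ \ S).card ≤ ∑ y ∈ univ \ S, (Fintype.card F * nu E y) := by
    calc E.card^2 * (univ \ S).card = ∑ _y ∈ univ \ S, E.card^2 := by
          rw [Finset.sum_const, smul_eq_mul, mul_comm]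
      _ ≤ _ := Finset.sum_le_sum (fun y _ => cs_univ E y)
  have h3 : ∑ y ∈ univ, (Fintype.card F * nu E y)
      = Fintype.card F * ∑ y : Fin d → F, nu E y := by rw [Finset.mul_sum]
  omega

lemma markov1 :
    E.card^2 * ((univ : Finset (Fin d → F)).filter
        (fun y => 2 * E.card^2 ≤ Fintype.card F * nu E y)).card
      + (Fintype.card F)^d * E.card ≤ (Fintype.card F)^(d+1) * E.card := by
  set S := (univ : Finset (Fin d → F)).filter
      (fun y => 2 * E.card^2 ≤ Fintype.card F * nu E y) with hSdef
  have hcore := markov_core E S (fun _ => 2 * E.card ^ 2)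
    (fun y hy => (Finset.mem_filter.mp hy).2)
  rw [Finset.sum_const, smul_eq_mul] at hcore
  have hu : (univ \ S).card + S.card = (Fintype.card F)^d := by
    rw [Finset.card_sdiff_add_card_eq_card (Finset.subset_univ S), Finset.card_univ]
    simp
  have hqd : (Fintype.card F)^d * E.card^2
      = (univ \ S).card * E.card^2 + S.card * E.card^2 := by
    rw [← add_mul, hu]
  have h5 : S.card * (2 * E.card ^ 2) = E.card^2 * S.card + E.card^2 * S.card := by ring
  have h6 : E.card^2 * (univ \ S).card = (univ \ S).card * E.card^2 := by ring
  have h7 : S.card * E.card^2 = E.card^2 * S.card := by ring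
  omega

lemma markov2 (S' : Finset (Fin d → F)) (h0 : (0 : Fin d → F) ∉ S')
    (hS' : ∀ y ∈ S', 2 * E.card^2 ≤ Fintype.card F * nu E y) :
    E.card^2 * S'.card + Fintype.card F * E.card^2 + (Fintype.card F)^d * E.card
      ≤ (Fintype.card F)^(d+1) * E.card + E.card^2 := by
  set S : Finset (Fin d → F) := insert 0 S' with hS
  have hw : ∀ y ∈ S, (if y = 0 then Fintype.card F * E.card^2 else 2 * E.card^2)
      ≤ Fintype.card F * nu E y := by
    intro y hy
    by_cases h : y = 0
    · rw [if_pos h, h, nu_zero]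
    · rw [if_neg h]
      rcases Finset.mem_insert.mp hy with h' | h'
      · exact absurd h' h
      · exact hS' y h'
  have hcore := markov_core E S _ hw
  have hsumw : ∑ y ∈ S, (if y = 0 then Fintype.card F * E.card^2 else 2 * E.card^2)
      = Fintype.card F * E.card^2 + 2 * E.card^2 * S'.card := by
    rw [hS, Finset.sum_insert h0, if_pos rfl]
    congr 1
    rw [Finset.sum_ite_of_false, Finset.sum_const, smul_eq_mul, mul_comm]
    intro y hy
    exact fun h => h0 (h ▸ hy)
  rw [hsumw] at hcore
  have hcardS : S.card = S'.card + 1 := by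
    rw [hS, Finset.card_insert_of_notMem h0]
  have hu : (univ \ S).card + S.card = (Fintype.card F)^d := by
    rw [Finset.card_sdiff_add_card_eq_card (Finset.subset_univ S), Finset.card_univ]
    simp
  have hqd : (Fintype.card F)^d * E.card^2
      = (univ \ S).card * E.card^2 + S'.card * E.card^2 + E.card^2 := by
    rw [← hu, hcardS]; ring
  have h5 : 2 * E.card^2 * S'.card = E.card^2 * S'.card + E.card^2 * S'.card := by ring
  have h6 : E.card^2 * (univ \ S).card = (univ \ S).card * E.card^2 := by ring
  have h7 : S'.card * E.card^2 = E.card^2 * S'.card := by ring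
  omega

def nline (y : Fin d → F) : ℕ :=
  (E.filter (fun x => x ≠ 0 ∧ ∃ s : F, s ≠ 0 ∧ x = s • y)).card

def lineF (y : Fin d → F) : Finset (Fin d → F) :=
  ((univ : Finset F).filter (· ≠ 0)).image (· • y)

lemma mem_lineF {y y' : Fin d → F} : y' ∈ lineF y ↔ ∃ s : F, s ≠ 0 ∧ y' = s • y := by
  simp only [lineF, Finset.mem_image, Finset.mem_filter, Finset.mem_univ, true_and]
  constructor
  · rintro ⟨s, hs, rfl⟩; exact ⟨s, hs, rfl⟩
  · rintro ⟨s, hs, rfl⟩; exact ⟨s, hs, rfl⟩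

lemma lineF_card {y : Fin d → F} (hy : y ≠ 0) : (lineF y).card = Fintype.card F - 1 := by
  rw [lineF, Finset.card_image_of_injOn, Finset.filter_ne' univ 0,
    Finset.card_erase_of_mem (Finset.mem_univ 0), Finset.card_univ]
  intro s _ t _ hst
  by_contra hne
  simp only at hst
  have : (s - t) • y = 0 := by rw [sub_smul, hst, sub_self]
  rcases smul_eq_zero.mp this with h | h
  · exact hne (sub_eq_zero.mp h)
  · exact hy h

lemma nline_smul (y : Fin d → F) (s : F) (hs : s ≠ 0) : nline E (s • y) = nline E y := by
  unfold nline
  congr 1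
  apply Finset.filter_congr
  intro x _
  constructor
  · rintro ⟨hx0, t, ht, rfl⟩
    exact ⟨hx0, t * s, mul_ne_zero ht hs, smul_smul t s y⟩
  · rintro ⟨hx0, t, ht, rfl⟩
    refine ⟨hx0, t * s⁻¹, mul_ne_zero ht (inv_ne_zero hs), ?_⟩
    rw [smul_smul, mul_assoc, inv_mul_cancel₀ hs, mul_one]

lemma pairs_bound (P : Finset (Fin d → F)) (hPE : P ⊆ E)
    (hP : ∀ y ∈ P, y ≠ 0 ∧ (2 * E.card ^ 2 ≤ Fintype.card F * nu E y)
      ∧ 2 * nline E y ≤ Fintype.card F) :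
    2 * (P.card * (Fintype.card F - 1)) ≤ Fintype.card F *
      ((univ : Finset (Fin d → F)).filter
        (fun y' => y' ≠ 0 ∧ 2 * E.card ^ 2 ≤ Fintype.card F * nu E y')).card := by
  classical
  set Bad := (univ : Finset (Fin d → F)).filter
      (fun y' => y' ≠ 0 ∧ 2 * E.card ^ 2 ≤ Fintype.card F * nu E y') with hBad
  have h1 : P.card * (Fintype.card F - 1) = ∑ y ∈ P, (lineF y).card := by
    rw [Finset.sum_congr rfl (fun y hy => lineF_card (hP y hy).1), Finset.sum_const,
      smul_eq_mul]
  have h2 : ∑ y ∈ P, (lineF y).card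
      = ∑ y' : Fin d → F, (P.filter (fun y => y' ∈ lineF y)).card := by
    have e1 : ∀ y : Fin d → F,
        (lineF y).card = ∑ y' : Fin d → F, if y' ∈ lineF y then 1 else 0 := by
      intro y
      rw [← Finset.card_filter, Finset.filter_univ_mem]
    rw [Finset.sum_congr rfl (fun y _ => e1 y), Finset.sum_comm]
    exact Finset.sum_congr rfl (fun y' _ => (Finset.card_filter _ _).symm)
  have h3 : ∀ y' : Fin d → F, 2 * (P.filter (fun y => y' ∈ lineF y)).card
      ≤ if y' ∈ Bad then Fintype.card F else 0 := by
    intro y'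
    rcases (P.filter (fun y => y' ∈ lineF y)).eq_empty_or_nonempty with hemp | ⟨y₀, hy₀⟩
    · rw [hemp]
      simp only [Finset.card_empty, Nat.mul_zero]
      exact Nat.zero_le _
    · obtain ⟨hy₀P, hy₀l⟩ := Finset.mem_filter.mp hy₀
      obtain ⟨hy₀0, hy₀bad, hy₀poor⟩ := hP y₀ hy₀P
      obtain ⟨s, hs, rfl⟩ := mem_lineF.mp hy₀l
      have hyBad : (s • y₀) ∈ Bad := by
        rw [hBad, Finset.mem_filter]
        refine ⟨Finset.mem_univ _, smul_ne_zero hs hy₀0, ?_⟩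
        rw [nu_smul E y₀ s hs]
        exact hy₀bad
      rw [if_pos hyBad]
      have hsubfil : (P.filter (fun y => (s • y₀) ∈ lineF y))
          ⊆ E.filter (fun x => x ≠ 0 ∧ ∃ t : F, t ≠ 0 ∧ x = t • (s • y₀)) := by
        intro y hy
        obtain ⟨hyP, hyl⟩ := Finset.mem_filter.mp hy
        obtain ⟨t, ht, hty⟩ := mem_lineF.mp hyl
        refine Finset.mem_filter.mpr ⟨hPE hyP, (hP y hyP).1, t⁻¹, inv_ne_zero ht, ?_⟩
        rw [hty, smul_smul, inv_mul_cancel₀ ht, one_smul]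
      have hcard1 : (P.filter (fun y => (s • y₀) ∈ lineF y)).card ≤ nline E (s • y₀) :=
        Finset.card_le_card hsubfil
      have : nline E (s • y₀) = nline E y₀ := nline_smul E y₀ s hs
      omega
  calc 2 * (P.card * (Fintype.card F - 1))
      = ∑ y' : Fin d → F, 2 * (P.filter (fun y => y' ∈ lineF y)).card := by
        rw [h1, h2, Finset.mul_sum]
    _ ≤ ∑ y' : Fin d → F, (if y' ∈ Bad then Fintype.card F else 0) :=
        Finset.sum_le_sum (fun y' _ => h3 y')
    _ = Fintype.card F * Bad.card := by
        rw [Finset.sum_ite_mem, Finset.univ_inter, Finset.sum_const, smul_eq_mul, mul_comm]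

lemma rich_orth (y y' : Fin d → F) (hyE : y ∈ E)
    (hybad : ¬ (Fintype.card F < 2 * (piy E y).card))
    (hrich : Fintype.card F < 2 * nline E y') :
    dot y' y = 0 := by
  by_contra ht
  apply hybad
  have hle : nline E y' ≤ (piy E y).card := by
    apply Finset.card_le_card_of_injOn (fun x => dot x y)
    · intro x hx
      exact Finset.mem_image_of_mem _ (Finset.mem_filter.mp hx).1
    · intro x₁ hx₁ x₂ hx₂ heq
      simp only [Finset.coe_filter, Set.mem_setOf_eq] at hx₁ hx₂
      obtain ⟨-, -, s₁, hs₁, rfl⟩ := hx₁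
      obtain ⟨-, -, s₂, hs₂, rfl⟩ := hx₂
      simp only [dot_smul_left] at heq
      rw [mul_right_cancel₀ ht heq]
  omega

theorem core (hcard : (Fintype.card F)^(d+1) ≤ E.card^2) :
    E.card ≤ 16 * (E.filter (fun y => Fintype.card F < 2 * (piy E y).card)).card := by
  classical
  have hq2 : 2 ≤ Fintype.card F := Fintype.one_lt_card
  set E' := E.filter (fun y => Fintype.card F < 2 * (piy E y).card) with hE'
  set Ebad := E.filter (fun y => ¬ (Fintype.card F < 2 * (piy E y).card)) with hEbad
  have hsplitE : E'.card + Ebad.card = E.card := by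
    rw [hE', hEbad]
    exact Finset.card_filter_add_card_filter_not _
  have hE1 : 1 ≤ E.card := by
    rcases Nat.eq_zero_or_pos E.card with h | h
    · exfalso
      have h2 : E.card ^ 2 = 0 := by rw [h]; ring
      have : 0 < (Fintype.card F)^(d+1) := Nat.pow_pos (by omega)
      omega
    · exact h
  -- real versions of common quantities
  have hk2 : (2:ℝ) ≤ (Fintype.card F : ℝ) := by exact_mod_cast hq2
  have he1 : (1:ℝ) ≤ (E.card : ℝ) := by exact_mod_cast hE1
  have hpow : ((Fintype.card F : ℝ))^(d+1) = (Fintype.card F : ℝ)^d * (Fintype.card F : ℝ) :=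
    pow_succ _ _
  have hu1 : (1:ℝ) ≤ (Fintype.card F : ℝ)^d := one_le_pow₀ (by linarith)
  have hF2 : (Fintype.card F : ℝ)^d * (Fintype.card F : ℝ) ≤ (E.card:ℝ)^2 := by
    have h : ((Fintype.card F : ℝ))^(d+1) ≤ (E.card:ℝ)^2 := by exact_mod_cast hcard
    rw [hpow] at h
    exact h
  have hgoalR : ((E.card : ℝ) ≤ 16 * (E'.card : ℝ)) → E.card ≤ 16 * E'.card := by
    intro h
    exact_mod_cast h
  apply hgoalR
  by_cases hq16 : Fintype.card F ≤ 16
  · -- elementary branch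
    set BA := (univ : Finset (Fin d → F)).filter
        (fun y => 2 * E.card^2 ≤ Fintype.card F * nu E y) with hBA
    have hm1 := markov1 E
    have hEbadBA : Ebad ⊆ BA := by
      intro y hy
      rw [hBA, Finset.mem_filter]
      exact ⟨Finset.mem_univ _, bad_nu E y (Finset.mem_filter.mp hy).2⟩
    have hEble : Ebad.card ≤ BA.card := Finset.card_le_card hEbadBA
    have F1 : (E.card:ℝ)^2 * BA.card + (Fintype.card F : ℝ)^d * E.card
        ≤ (Fintype.card F : ℝ)^d * (Fintype.card F : ℝ) * E.card := by
      have h : (E.card:ℝ)^2 * BA.card + (Fintype.card F : ℝ)^d * E.card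
          ≤ (Fintype.card F : ℝ)^(d+1) * E.card := by exact_mod_cast hm1
      rw [hpow] at h
      exact h
    have hk16 : (Fintype.card F : ℝ) ≤ 16 := by exact_mod_cast hq16
    have heb : (Ebad.card : ℝ) ≤ (BA.card : ℝ) := by exact_mod_cast hEble
    have hspl : (E'.card : ℝ) + Ebad.card = E.card := by exact_mod_cast hsplitE
    have he2pos : (0:ℝ) < (E.card:ℝ)^2 := by positivity
    have hk0 : (0:ℝ) ≤ (Fintype.card F : ℝ) := by linarith
    have he0 : (0:ℝ) ≤ (E.card : ℝ) := by linarith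
    have hkm0 : (0:ℝ) ≤ (Fintype.card F : ℝ) - 1 := by linarith
    have hA := mul_le_mul_of_nonneg_left F1 hk0
    have hB := mul_le_mul_of_nonneg_right hF2 (mul_nonneg he0 hkm0)
    have hkey2 : (E.card:ℝ)^2 * ((Fintype.card F : ℝ) * BA.card)
        ≤ (E.card:ℝ)^2 * (((Fintype.card F : ℝ) - 1) * E.card) := by
      nlinarith [hA, hB]
    have hkey : (Fintype.card F : ℝ) * BA.card
        ≤ ((Fintype.card F : ℝ) - 1) * E.card :=
      le_of_mul_le_mul_left hkey2 he2pos
    have hC := mul_le_mul_of_nonneg_left heb hk0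
    have hD := mul_le_mul_of_nonneg_right hk16 (Nat.cast_nonneg (α := ℝ) E'.card)
    nlinarith [hkey, hC, hD, hspl, hk2, he1, Nat.cast_nonneg (α := ℝ) E'.card,
      Nat.cast_nonneg (α := ℝ) Ebad.card]
  · -- geometric branch
    push_neg at hq16
    set P := E.filter (fun y => y ≠ 0 ∧ ¬ (Fintype.card F < 2 * (piy E y).card)
        ∧ 2 * nline E y ≤ Fintype.card F) with hP
    set Rb := E.filter (fun y => y ≠ 0 ∧ ¬ (Fintype.card F < 2 * (piy E y).card)
        ∧ Fintype.card F < 2 * nline E y) with hRb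
    have hEbadsub : Ebad ⊆ insert 0 (P ∪ Rb) := by
      intro y hy
      obtain ⟨hyE, hybad⟩ := Finset.mem_filter.mp hy
      rcases eq_or_ne y 0 with rfl | hy0
      · exact Finset.mem_insert_self _ _
      · apply Finset.mem_insert_of_mem
        rcases le_or_gt (2 * nline E y) (Fintype.card F) with hpoor | hrich
        · exact Finset.mem_union_left _ (Finset.mem_filter.mpr ⟨hyE, hy0, hybad, hpoor⟩)
        · exact Finset.mem_union_right _ (Finset.mem_filter.mpr ⟨hyE, hy0, hybad, hrich⟩)
    have hbadcard : Ebad.card ≤ 1 + (P.card + Rb.card) := by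
      calc Ebad.card ≤ (insert 0 (P ∪ Rb)).card := Finset.card_le_card hEbadsub
        _ ≤ (P ∪ Rb).card + 1 := Finset.card_insert_le _ _
        _ ≤ 1 + (P.card + Rb.card) := by
            have := Finset.card_union_le P Rb
            omega
    have hpairs := pairs_bound E P (Finset.filter_subset _ _) (by
      intro y hy
      obtain ⟨hyE, hy0, hybad, hpoor⟩ := Finset.mem_filter.mp hy
      exact ⟨hy0, bad_nu E y hybad, hpoor⟩)
    set BNZ := (univ : Finset (Fin d → F)).filter
        (fun y' => y' ≠ 0 ∧ 2 * E.card ^ 2 ≤ Fintype.card F * nu E y') with hBNZ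
    have hm2 := markov2 E BNZ (by simp [hBNZ]) (by
      intro y hy
      exact ((Finset.mem_filter.mp hy).2).2)
    have hiso : Rb.card ^ 2 * Fintype.card F ≤ (Fintype.card F)^(d+1) := by
      apply isotropic_card
      intro x hx y hy
      obtain ⟨hyE, hy0, hybad, hyrich⟩ := Finset.mem_filter.mp hy
      obtain ⟨hxE, hx0, hxbad, hxrich⟩ := Finset.mem_filter.mp hx
      exact rich_orth E y x hyE hybad hxrich
    -- real arithmetic
    have hk16 : (16:ℝ) ≤ (Fintype.card F : ℝ) := by
      have : (16:ℕ) ≤ Fintype.card F := by omega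
      exact_mod_cast this
    have G1 : 2 * ((P.card:ℝ) * ((Fintype.card F : ℝ) - 1))
        ≤ (Fintype.card F : ℝ) * BNZ.card := by
      have := hpairs
      have hc : ((2 * (P.card * (Fintype.card F - 1)) : ℕ) : ℝ)
          ≤ ((Fintype.card F * BNZ.card : ℕ) : ℝ) := by exact_mod_cast this
      rw [Nat.cast_mul, Nat.cast_mul, Nat.cast_mul, Nat.cast_sub (by omega)] at hc
      push_cast at hc ⊢
      linarith
    have G2 : (E.card:ℝ)^2 * BNZ.card + (Fintype.card F : ℝ) * (E.card:ℝ)^2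
          + (Fintype.card F : ℝ)^d * E.card
        ≤ (Fintype.card F : ℝ)^d * (Fintype.card F : ℝ) * E.card + (E.card:ℝ)^2 := by
      have hc : (E.card:ℝ)^2 * BNZ.card + (Fintype.card F : ℝ) * (E.card:ℝ)^2
            + (Fintype.card F : ℝ)^d * E.card
          ≤ (Fintype.card F : ℝ)^(d+1) * E.card + (E.card:ℝ)^2 := by exact_mod_cast hm2
      rw [hpow] at hc
      exact hc
    have G3 : (Rb.card:ℝ)^2 * (Fintype.card F : ℝ)
        ≤ (Fintype.card F : ℝ)^d * (Fintype.card F : ℝ) := by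
      have hc : (Rb.card:ℝ)^2 * (Fintype.card F : ℝ)
          ≤ (Fintype.card F : ℝ)^(d+1) := by exact_mod_cast hiso
      rw [hpow] at hc
      exact hc
    have hspl : (E'.card : ℝ) + Ebad.card = E.card := by exact_mod_cast hsplitE
    have heb : (Ebad.card : ℝ) ≤ 1 + ((P.card:ℝ) + Rb.card) := by exact_mod_cast hbadcard
    have he2pos : (0:ℝ) < (E.card:ℝ)^2 := by positivity
    have hkm1 : (0:ℝ) < (Fintype.card F : ℝ) - 1 := by linarith
    -- Step 1 : 2p + k ≤ e
    have hk0 : (0:ℝ) ≤ (Fintype.card F : ℝ) := by linarith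
    have he0 : (0:ℝ) ≤ (E.card : ℝ) := by linarith
    have hkm0 : (0:ℝ) ≤ (Fintype.card F : ℝ) - 1 := by linarith
    have hA1 := mul_le_mul_of_nonneg_right G1 (sq_nonneg (E.card:ℝ))
    have hA2 := mul_le_mul_of_nonneg_left G2 hk0
    have hB := mul_le_mul_of_nonneg_right hF2 (mul_nonneg he0 hkm0)
    have s1 : ((Fintype.card F : ℝ) - 1) * (2 * (P.card:ℝ) * (E.card:ℝ)^2
          + (Fintype.card F : ℝ) * (E.card:ℝ)^2)
        ≤ ((Fintype.card F : ℝ) - 1) * ((E.card:ℝ)^2 * (E.card:ℝ)) := by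
      nlinarith [hA1, hA2, hB]
    have s1' : 2 * (P.card:ℝ) * (E.card:ℝ)^2 + (Fintype.card F : ℝ) * (E.card:ℝ)^2
        ≤ (E.card:ℝ)^2 * (E.card:ℝ) := le_of_mul_le_mul_left s1 hkm1
    have step1 : 2 * (P.card:ℝ) + (Fintype.card F : ℝ) ≤ (E.card:ℝ) := by
      have h := s1'
      have : (E.card:ℝ)^2 * (2 * (P.card:ℝ) + (Fintype.card F : ℝ))
          ≤ (E.card:ℝ)^2 * (E.card:ℝ) := by nlinarith [h]
      exact le_of_mul_le_mul_left this he2pos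
    -- Step 2 : 4r ≤ e
    have step2 : 4 * (Rb.card:ℝ) ≤ (E.card:ℝ) := by
      by_contra hcon
      push_neg at hcon
      have hr0 : (0:ℝ) ≤ (Rb.card:ℝ) := Nat.cast_nonneg _
      have he0 : (0:ℝ) ≤ (E.card:ℝ) := Nat.cast_nonneg _
      have h1 := mul_le_mul_of_nonneg_left hk16 (sq_nonneg (Rb.card:ℝ))
      have h2 := mul_self_lt_mul_self he0 hcon
      nlinarith [G3, hF2, h1, h2]
    -- conclusion
    linarith [hspl, heb, step1, step2, hk16, Nat.cast_nonneg (α := ℝ) E'.card]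


end PinnedAux

open Finset

/-- Pinned dot products: there is an absolute constant `c > 0` such that for every
finite field `𝔽_q`, every `d` and every `E ⊆ 𝔽_q^d` with `|E| ≥ q^{(d+1)/2}`,
there is `E' ⊆ E` with `|E'| ≥ c|E|` such that `|Π_y(E)| > q/2` for all `y ∈ E'`. -/
theorem stmt_4 :
    ∃ c : ℝ, 0 < c ∧
      ∀ (F : Type) [Field F] [Fintype F] [DecidableEq F],
        ∀ (d : ℕ) (E : Finset (Fin d → F)),
          (E.card : ℝ) ≥ (Fintype.card F : ℝ) ^ (((d : ℝ) + 1) / 2) →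
          ∃ E' ⊆ E, c * (E.card : ℝ) ≤ (E'.card : ℝ) ∧
            ∀ y ∈ E',
              (((E.image (fun x : Fin d → F => ∑ i, x i * y i)).card : ℝ)
                > (Fintype.card F : ℝ) / 2) := by
  classical
  refine ⟨1/16, by norm_num, ?_⟩
  intro F _ _ _ d E hE
  have hq2 : 2 ≤ Fintype.card F := Fintype.one_lt_card
  have h0 : (0:ℝ) ≤ (Fintype.card F : ℝ) := by positivity
  have hsq : ((Fintype.card F : ℝ) ^ (((d:ℝ)+1)/2)) ^ 2
      = (Fintype.card F : ℝ) ^ ((d:ℝ)+1) := by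
    rw [← Real.rpow_natCast ((Fintype.card F : ℝ) ^ (((d:ℝ)+1)/2)) 2, ← Real.rpow_mul h0]
    norm_num
  have h2 : (Fintype.card F : ℝ) ^ ((d:ℝ)+1) = ((Fintype.card F ^ (d+1) : ℕ) : ℝ) := by
    rw [show ((d:ℝ)+1) = ((d+1:ℕ):ℝ) by push_cast; ring, Real.rpow_natCast]
    push_cast
    ring
  have hcast : ((Fintype.card F ^ (d+1) : ℕ) : ℝ) ≤ ((E.card ^ 2 : ℕ) : ℝ) := by
    rw [← h2, ← hsq]
    have h3 : (0:ℝ) ≤ (Fintype.card F : ℝ) ^ (((d:ℝ)+1)/2) := Real.rpow_nonneg h0 _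
    push_cast
    nlinarith [hE, h3]
  have hcard : Fintype.card F ^ (d+1) ≤ E.card ^ 2 := by exact_mod_cast hcast
  have hcore := PinnedAux.core E hcard
  refine ⟨E.filter (fun y => Fintype.card F < 2 * (PinnedAux.piy E y).card),
    Finset.filter_subset _ _, ?_, ?_⟩
  · have hc : (E.card : ℝ)
        ≤ 16 * ((E.filter (fun y => Fintype.card F < 2 * (PinnedAux.piy E y).card)).card : ℝ) := by
      exact_mod_cast hcore
    linarith
  · intro y hy
    have hgt := (Finset.mem_filter.mp hy).2
    have him : E.image (fun x : Fin d → F => ∑ i, x i * y i) = PinnedAux.piy E y := rfl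
    rw [him]
    have hgt2 : (Fintype.card F : ℝ) < 2 * ((PinnedAux.piy E y).card : ℝ) := by
      exact_mod_cast hgt
    linarith
end

section
/- Let $\mathbb{F}_q$ have odd characteristic and let $S_t = \{x \in \mathbb{F}_q^d : x_1^2 + \cdots + x_d^2 = t\}$. Then $\sum_{t \in \mathbb{F}_q} |S_t|^2 = q^{2d-1} + q^d - q^{d-1}$. -/
open Finset

lemma ker_count (F : Type) [Field F] [Fintype F] [DecidableEq F] (d : ℕ)
    (u : Fin d → F) (hu : u ≠ 0) :
    (Finset.univ.filter (fun v : Fin d → F => ∑ i, u i * v i = 0)).card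
      = Fintype.card F ^ (d - 1) := by
  classical
  set φ : (Fin d → F) →ₗ[F] F :=
    { toFun := fun v => ∑ i, u i * v i
      map_add' := by intro a b; simp [mul_add, Finset.sum_add_distrib]
      map_smul' := by
        intro c a
        simp only [Pi.smul_apply, smul_eq_mul, RingHom.id_apply, Finset.mul_sum]
        exact Finset.sum_congr rfl fun i _ => by ring }
  have hφsurj : Function.Surjective φ := by
    obtain ⟨j, hj⟩ := Function.ne_iff.mp hu
    simp only [Pi.zero_apply] at hj
    intro c
    refine ⟨Pi.single j (c / u j), ?_⟩
    simp only [φ, LinearMap.coe_mk, AddHom.coe_mk]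
    rw [Finset.sum_eq_single j]
    · rw [Pi.single_eq_same]; field_simp
    · intro i _ hij; rw [Pi.single_eq_of_ne hij, mul_zero]
    · simp
  have hker : Module.finrank F (LinearMap.ker φ) = d - 1 := by
    have h1 := LinearMap.finrank_range_add_finrank_ker φ
    rw [LinearMap.range_eq_top.mpr hφsurj] at h1
    simp [Module.finrank_pi] at h1
    omega
  have hcard : Fintype.card (LinearMap.ker φ) = Fintype.card F ^ (d - 1) := by
    have hb := Module.card_fintype (Module.finBasis F (LinearMap.ker φ))
    rw [Fintype.card_fin] at hb
    rw [hb, hker]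
  rw [← Fintype.card_subtype, ← hcard]
  exact Fintype.card_congr (Equiv.subtypeEquivRight fun x => by
    rw [LinearMap.mem_ker]; exact Iff.rfl)

lemma nat_version (F : Type) [Field F] [Fintype F] [DecidableEq F]
    (hchar : ringChar F ≠ 2) (d : ℕ) :
    ∑ t : F, ((Finset.univ.filter (fun x : Fin d → F => ∑ i, x i ^ 2 = t)).card) ^ 2
      = Fintype.card F ^ d + (Fintype.card F ^ d - 1) * Fintype.card F ^ (d - 1) := by
  classical
  have h2 : (2 : F) ≠ 0 := Ring.two_ne_zero hchar
  have stepA : ∑ t : F, ((Finset.univ.filter (fun x : Fin d → F => ∑ i, x i ^ 2 = t)).card) ^ 2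
      = (Finset.univ.filter (fun p : (Fin d → F) × (Fin d → F) =>
          ∑ i, p.1 i ^ 2 = ∑ i, p.2 i ^ 2)).card := by
    rw [Finset.card_eq_sum_card_fiberwise (f := fun p => ∑ i, p.1 i ^ 2)
      (t := Finset.univ) (fun _ _ => Finset.mem_univ _)]
    refine (Finset.sum_congr rfl fun t _ => ?_).symm
    rw [Finset.filter_filter, sq, ← Finset.card_product]
    congr 1
    ext p
    simp only [Finset.mem_product, Finset.mem_filter, Finset.mem_univ, true_and]
    constructor <;> rintro ⟨ha, hb⟩ <;> simp_all
  have stepB : (Finset.univ.filter (fun p : (Fin d → F) × (Fin d → F) =>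
          ∑ i, p.1 i ^ 2 = ∑ i, p.2 i ^ 2)).card
      = (Finset.univ.filter (fun p : (Fin d → F) × (Fin d → F) =>
          ∑ i, p.1 i * p.2 i = 0)).card := by
    apply Finset.card_nbij'
      (i := fun p : (Fin d → F) × (Fin d → F) =>
        ((fun k => p.1 k + p.2 k, fun k => p.1 k - p.2 k) : (Fin d → F) × (Fin d → F)))
      (j := fun p : (Fin d → F) × (Fin d → F) =>
        ((fun k => (p.1 k + p.2 k) / 2, fun k => (p.1 k - p.2 k) / 2) : (Fin d → F) × (Fin d → F)))
    · intro p hp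
      simp only [Finset.mem_coe, Finset.mem_filter, Finset.mem_univ, true_and] at hp ⊢
      have h : ∑ i, (p.1 i + p.2 i) * (p.1 i - p.2 i)
          = ∑ i, p.1 i ^ 2 - ∑ i, p.2 i ^ 2 := by
        rw [← Finset.sum_sub_distrib]
        exact Finset.sum_congr rfl fun i _ => by ring
      rw [h, hp, sub_self]
    · intro p hp
      simp only [Finset.mem_coe, Finset.mem_filter, Finset.mem_univ, true_and] at hp ⊢
      have h : ∑ i, ((p.1 i + p.2 i) / 2) ^ 2 - ∑ i, ((p.1 i - p.2 i) / 2) ^ 2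
          = ∑ i, p.1 i * p.2 i := by
        rw [← Finset.sum_sub_distrib]
        refine Finset.sum_congr rfl fun i _ => ?_
        field_simp
        ring
      rw [hp] at h
      exact sub_eq_zero.mp h
    · intro p hp
      refine Prod.ext (funext fun k => ?_) (funext fun k => ?_) <;> (show _ = _) <;>
        field_simp <;> ring
    · intro p hp
      refine Prod.ext (funext fun k => ?_) (funext fun k => ?_) <;> (show _ = _) <;>
        field_simp <;> ring
  have stepC : (Finset.univ.filter (fun p : (Fin d → F) × (Fin d → F) =>
          ∑ i, p.1 i * p.2 i = 0)).card
      = Fintype.card F ^ d + (Fintype.card F ^ d - 1) * Fintype.card F ^ (d - 1) := by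
    rw [Finset.card_filter]
    rw [← Finset.univ_product_univ, Finset.sum_product]
    have hfib : ∀ u : Fin d → F,
        (∑ v : Fin d → F, if ∑ i, u i * v i = 0 then 1 else 0)
          = if u = 0 then Fintype.card F ^ d else Fintype.card F ^ (d - 1) := by
      intro u
      rw [← Finset.card_filter]
      by_cases hu : u = 0
      · subst hu
        simp [Finset.filter_true_of_mem, Fintype.card_pi]
      · rw [if_neg hu]
        exact ker_count F d u hu
    rw [Finset.sum_congr rfl fun u _ => hfib u]
    rw [← Finset.sum_filter_add_sum_filter_not Finset.univ (fun u : Fin d → F => u = 0)]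
    have e1 : Finset.univ.filter (fun u : Fin d → F => u = 0) = {0} := by ext u; simp
    have e2 : Finset.univ.filter (fun u : Fin d → F => ¬ u = 0) = Finset.univ.erase 0 := by
      ext u; simp [Finset.mem_erase]
    rw [e1, e2, Finset.sum_singleton, if_pos rfl]
    rw [Finset.sum_congr rfl fun u hu => if_neg (Finset.mem_erase.mp hu).1]
    rw [Finset.sum_const, Finset.card_erase_of_mem (Finset.mem_univ _), Finset.card_univ,
      smul_eq_mul]
    congr 2
    simp [Fintype.card_fun]
  rw [stepA, stepB, stepC]

/-- `∑_t |S_t|² = q^{2d-1} + q^d - q^{d-1}` for spheres in `𝔽_q^d`, `q` odd. -/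
theorem stmt_14 (F : Type) [Field F] [Fintype F] [DecidableEq F]
    (hchar : ringChar F ≠ 2) (d : ℕ) (hd : 1 ≤ d) :
    ∑ t : F, ((Finset.univ.filter (fun x : Fin d → F => ∑ i, x i ^ 2 = t)).card : ℝ) ^ 2
      = (Fintype.card F : ℝ) ^ (2 * d - 1) + (Fintype.card F : ℝ) ^ d
        - (Fintype.card F : ℝ) ^ (d - 1) := by
  have e : d + (d - 1) = 2 * d - 1 := by omega
  have h := nat_version F hchar d
  have h1 : 1 ≤ Fintype.card F ^ d := Nat.one_le_pow _ _ Fintype.card_pos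
  have hcast : (∑ t : F, ((Finset.univ.filter
      (fun x : Fin d → F => ∑ i, x i ^ 2 = t)).card : ℝ) ^ 2)
      = ((∑ t : F, ((Finset.univ.filter
        (fun x : Fin d → F => ∑ i, x i ^ 2 = t)).card) ^ 2 : ℕ) : ℝ) := by
    push_cast; rfl
  rw [hcast, h]
  have hpow : ((Fintype.card F : ℝ)) ^ (2 * d - 1)
      = (Fintype.card F : ℝ) ^ d * (Fintype.card F : ℝ) ^ (d - 1) := by
    rw [← e, pow_add]
  rw [Nat.cast_add, Nat.cast_mul, Nat.cast_sub h1, Nat.cast_pow, Nat.cast_pow,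
    Nat.cast_one, hpow]
  ring
end

section
/- Let $E \subseteq \mathbb{F}_q^d$ and for $y^1,\ldots,y^k \in E$, $s_1,\ldots,s_k \in \mathbb{F}_q$ define $\eta_{y^1,\ldots,y^k}(s_1,\ldots,s_k) = |\{x \in E : x \cdot y^j = s_j \text{ for } j=1,\ldots,k\}|$. Then $\sum_{y^1,\ldots,y^k \in E}\sum_{s_1,\ldots,s_k \in \mathbb{F}_q} \eta_{y^1,\ldots,y^k}(s_1,\ldots,s_k)^2 \lesssim q^{-k}|E|^{k+2} + q^d|E|^k$. -/
open Finset

namespace Stmt19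

variable {F : Type} [Field F] [Fintype F] [DecidableEq F] {d : ℕ}

set_option linter.unusedSectionVars false

lemma addChar_sum (χ : AddChar F ℂ) {ι : Type*} (s : Finset ι) (f : ι → F) :
    χ (∑ i ∈ s, f i) = ∏ i ∈ s, χ (f i) := by
  classical
  induction s using Finset.cons_induction with
  | empty => simp
  | cons a s ha ih => rw [Finset.sum_cons, Finset.prod_cons, AddChar.map_add_eq_mul, ih]

lemma conj_char (χ : AddChar F ℂ) (a : F) : (starRingEnd ℂ) (χ a) = χ (-a) := by
  have hR : 0 < ringChar F := Nat.pos_of_ne_zero (CharP.ringChar_ne_zero_of_finite F)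
  rw [AddChar.starComp_apply hR, AddChar.inv_apply]

lemma orth0 (χ : AddChar F ℂ) (hχ : χ.IsPrimitive) (a : F) :
    ∑ t : F, χ (t * a) = if a = 0 then (Fintype.card F : ℂ) else 0 :=
  by rw [AddChar.sum_mulShift a hχ]; split_ifs <;> simp

lemma orthV (χ : AddChar F ℂ) (hχ : χ.IsPrimitive) (a : Fin d → F) :
    ∑ w : Fin d → F, χ (∑ i, w i * a i) =
      if a = 0 then (Fintype.card F : ℂ) ^ d else 0 := by
  have h1 : ∀ w : Fin d → F, χ (∑ i, w i * a i) = ∏ i, χ (w i * a i) := fun w =>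
    addChar_sum χ _ _
  simp_rw [h1]
  rw [← Fintype.piFinset_univ, Finset.sum_prod_piFinset univ fun i t => χ (t * a i)]
  rcases eq_or_ne a 0 with h | h
  · subst h
    rw [if_pos rfl]
    have : ∀ i : Fin d, ∑ t : F, χ (t * (0 : Fin d → F) i) = (Fintype.card F : ℂ) := by
      intro i; rw [orth0 χ hχ]; simp
    rw [Finset.prod_congr rfl fun i _ => this i, Finset.prod_const]
    simp
  · obtain ⟨i, hi⟩ := Function.ne_iff.mp h
    rw [if_neg h]
    apply Finset.prod_eq_zero (Finset.mem_univ i)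
    rw [orth0 χ hχ, if_neg (by simpa using hi)]

noncomputable def S (χ : AddChar F ℂ) (E : Finset (Fin d → F)) (w : Fin d → F) : ℂ :=
  ∑ x ∈ E, χ (∑ i, x i * w i)

def nu (E : Finset (Fin d → F)) (z : Fin d → F) : ℕ :=
  (E.filter fun y => ∑ i, z i * y i = 0).card

noncomputable def T (χ : AddChar F ℂ) (E : Finset (Fin d → F)) (z : Fin d → F) : ℂ :=
  ∑ t ∈ (univ : Finset F).erase 0, ∑ y ∈ E, χ (t * ∑ i, z i * y i)

lemma conj_S (χ : AddChar F ℂ) (E : Finset (Fin d → F)) (w : Fin d → F) :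
    (starRingEnd ℂ) (S χ E w) = ∑ x ∈ E, χ (-(∑ i, x i * w i)) := by
  rw [S, map_sum]
  exact Finset.sum_congr rfl fun x _ => conj_char χ _

lemma parseval (χ : AddChar F ℂ) (hχ : χ.IsPrimitive) (E : Finset (Fin d → F)) :
    ∑ w : Fin d → F, (Complex.normSq (S χ E w) : ℝ)
      = (Fintype.card F : ℝ) ^ d * E.card := by
  have key : ∑ w : Fin d → F, (Complex.normSq (S χ E w) : ℂ)
      = (Fintype.card F : ℂ) ^ d * E.card := by
    have h1 : ∀ w, (Complex.normSq (S χ E w) : ℂ)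
        = ∑ x ∈ E, ∑ x' ∈ E, χ (∑ i, w i * (x i - x' i)) := by
      intro w
      rw [← Complex.mul_conj, conj_S, S, Finset.sum_mul_sum]
      refine Finset.sum_congr rfl fun x _ => Finset.sum_congr rfl fun x' _ => ?_
      rw [← AddChar.map_add_eq_mul]
      congr 1
      rw [← sub_eq_add_neg, ← Finset.sum_sub_distrib]
      exact Finset.sum_congr rfl fun i _ => by ring
    simp_rw [h1]
    rw [Finset.sum_comm]
    have h2 : ∀ x ∈ E, ∑ w : Fin d → F, ∑ x' ∈ E, χ (∑ i, w i * (x i - x' i))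
        = ∑ x' ∈ E, ∑ w : Fin d → F, χ (∑ i, w i * (x i - x' i)) := fun x _ =>
      Finset.sum_comm
    rw [Finset.sum_congr rfl h2]
    have h3 : ∀ (x x' : Fin d → F),
        ∑ w : Fin d → F, χ (∑ i, w i * (x i - x' i))
          = if x = x' then (Fintype.card F : ℂ) ^ d else 0 := by
      intro x x'
      have := orthV χ hχ (x - x')
      simp only [Pi.sub_apply] at this
      rw [this]
      simp_rw [sub_eq_zero]
    rw [Finset.sum_congr rfl fun x hx => Finset.sum_congr rfl fun x' _ => h3 x x']
    rw [Finset.sum_congr rfl fun x hx => by rw [Finset.sum_ite_eq, if_pos hx]]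
    rw [Finset.sum_const, nsmul_eq_mul]
    ring
  exact_mod_cast key

lemma qnu (χ : AddChar F ℂ) (hχ : χ.IsPrimitive) (E : Finset (Fin d → F))
    (z : Fin d → F) :
    (Fintype.card F : ℂ) * (nu E z : ℂ) = (E.card : ℂ) + T χ E z := by
  have h1 : ∑ t : F, ∑ y ∈ E, χ (t * ∑ i, z i * y i) = (E.card : ℂ) + T χ E z := by
    rw [T, ← Finset.add_sum_erase _ _ (Finset.mem_univ (0 : F))]
    congr 1
    simp
  rw [← h1, Finset.sum_comm]
  rw [Finset.sum_congr rfl fun y _ => orth0 χ hχ _]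
  rw [← Finset.sum_filter, nu, Finset.sum_const, nsmul_eq_mul, mul_comm]

lemma T_real (χ : AddChar F ℂ) (hχ : χ.IsPrimitive) (E : Finset (Fin d → F))
    (z : Fin d → F) :
    T χ E z = (((Fintype.card F : ℝ) * (nu E z : ℝ) - E.card : ℝ) : ℂ) := by
  have h := qnu χ hχ E z
  push_cast
  linear_combination -h

lemma normSq_T (χ : AddChar F ℂ) (hχ : χ.IsPrimitive) (E : Finset (Fin d → F))
    (z : Fin d → F) :
    (Complex.normSq (T χ E z) : ℝ)
      = ((Fintype.card F : ℝ) * (nu E z : ℝ) - E.card) ^ 2 := by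
  rw [T_real χ hχ, Complex.normSq_ofReal]
  ring

lemma fiber_smul (E : Finset (Fin d → F)) (f : (Fin d → F) → ℝ) (hf : ∀ w, 0 ≤ f w) :
    ∑ t ∈ (univ : Finset F).erase 0, ∑ y ∈ E, f (fun i => t * y i)
      ≤ (Fintype.card F : ℝ) * ∑ w : Fin d → F, f w := by
  have hsum : (0 : ℝ) ≤ ∑ w : Fin d → F, f w := Finset.sum_nonneg fun w _ => hf w
  have inner : ∀ t ∈ (univ : Finset F).erase 0,
      ∑ y ∈ E, f (fun i => t * y i) ≤ ∑ w : Fin d → F, f w := by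
    intro t ht
    have ht0 : t ≠ 0 := (Finset.mem_erase.mp ht).1
    have : ∑ y ∈ E, f (fun i => t * y i)
        = ∑ w ∈ E.image (fun y => fun i => t * y i), f w := by
      refine (Finset.sum_image ?_).symm
      intro y _ y' _ h
      funext i
      exact mul_left_cancel₀ ht0 (congrFun h i)
    rw [this]
    exact Finset.sum_le_sum_of_subset_of_nonneg (Finset.subset_univ _)
      (fun w _ _ => hf w)
  calc ∑ t ∈ (univ : Finset F).erase 0, ∑ y ∈ E, f (fun i => t * y i)
      ≤ ∑ _t ∈ (univ : Finset F).erase 0, ∑ w : Fin d → F, f w :=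
        Finset.sum_le_sum inner
    _ = ((univ : Finset F).erase 0).card * ∑ w : Fin d → F, f w := by
        rw [Finset.sum_const, nsmul_eq_mul]
    _ ≤ (Fintype.card F : ℝ) * ∑ w : Fin d → F, f w := by
        apply mul_le_mul_of_nonneg_right _ hsum
        exact_mod_cast Nat.cast_le.mpr ((Finset.card_erase_le).trans (le_of_eq Finset.card_univ))

lemma fiber_sub (E : Finset (Fin d → F)) (f : (Fin d → F) → ℝ) (hf : ∀ w, 0 ≤ f w) :
    ∑ x ∈ E, ∑ x' ∈ E, f (x - x') ≤ (E.card : ℝ) * ∑ z : Fin d → F, f z := by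
  have hsum : (0 : ℝ) ≤ ∑ z : Fin d → F, f z := Finset.sum_nonneg fun z _ => hf z
  have inner : ∀ x ∈ E, ∑ x' ∈ E, f (x - x') ≤ ∑ z : Fin d → F, f z := by
    intro x _
    have : ∑ x' ∈ E, f (x - x') = ∑ z ∈ E.image (fun x' => x - x'), f z := by
      refine (Finset.sum_image ?_).symm
      intro y _ y' _ h
      have h2 := congrArg (fun u => x - u) h
      simpa using h2
    rw [this]
    exact Finset.sum_le_sum_of_subset_of_nonneg (Finset.subset_univ _)
      (fun w _ _ => hf w)
  calc ∑ x ∈ E, ∑ x' ∈ E, f (x - x')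
      ≤ ∑ _x ∈ E, ∑ z : Fin d → F, f z := Finset.sum_le_sum inner
    _ = (E.card : ℝ) * ∑ z : Fin d → F, f z := by
        rw [Finset.sum_const, nsmul_eq_mul]

lemma T_prod (χ : AddChar F ℂ) (E : Finset (Fin d → F)) (z : Fin d → F) :
    T χ E z = ∑ p ∈ ((univ : Finset F).erase 0) ×ˢ E, χ (p.1 * ∑ i, z i * p.2 i) :=
  by
  rw [T, Finset.sum_product (f := fun p : F × (Fin d → F) => χ (p.1 * ∑ i, z i * p.2 i))]

/-- счет: inner determinacy -/
lemma inner_count (E : Finset (Fin d → F)) (c : ℝ) (hc : 0 ≤ c) (v : Fin d → F) :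
    ∑ p' ∈ ((univ : Finset F).erase 0) ×ˢ E,
        (if (fun i => v i - p'.1 * p'.2 i) = (0 : Fin d → F) then c else 0)
      ≤ (Fintype.card F : ℝ) * c := by
  rw [Finset.sum_product]
  have inner : ∀ t' ∈ (univ : Finset F).erase 0,
      ∑ y' ∈ E, (if (fun i => v i - t' * y' i) = (0 : Fin d → F) then c else 0) ≤ c := by
    intro t' ht'
    have ht'0 : t' ≠ 0 := (Finset.mem_erase.mp ht').1
    have hcond : ∀ y' : Fin d → F,
        ((fun i => v i - t' * y' i) = (0 : Fin d → F)) ↔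
          y' = fun i => t'⁻¹ * v i := by
      intro y'
      constructor
      · intro h
        funext i
        have h2 := congrFun h i
        simp only [Pi.zero_apply, sub_eq_zero] at h2
        exact (eq_inv_mul_iff_mul_eq₀ ht'0).mpr h2.symm
      · rintro rfl
        funext i
        simp [mul_inv_cancel_left₀ ht'0]
    simp_rw [hcond]
    rw [Finset.sum_ite_eq' E _ (fun _ => c)]
    split_ifs <;> simp [hc]
  calc ∑ t' ∈ (univ : Finset F).erase 0,
        ∑ y' ∈ E, (if (fun i => v i - t' * y' i) = (0 : Fin d → F) then c else 0)
      ≤ ∑ _t' ∈ (univ : Finset F).erase 0, c := Finset.sum_le_sum inner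
    _ = ((univ : Finset F).erase 0).card * c := by rw [Finset.sum_const, nsmul_eq_mul]
    _ ≤ (Fintype.card F : ℝ) * c := by
        apply mul_le_mul_of_nonneg_right _ hc
        exact_mod_cast Nat.cast_le.mpr ((Finset.card_erase_le).trans (le_of_eq Finset.card_univ))

lemma sumT_le (χ : AddChar F ℂ) (hχ : χ.IsPrimitive) (E : Finset (Fin d → F)) :
    ∑ z : Fin d → F, (Complex.normSq (T χ E z) : ℝ)
      ≤ (Fintype.card F : ℝ) ^ d * (Fintype.card F : ℝ) ^ 2 * E.card := by
  set P := ((univ : Finset F).erase 0) ×ˢ E with hP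
  have key : ∑ z : Fin d → F, (Complex.normSq (T χ E z) : ℂ)
      = ∑ p ∈ P, ∑ p' ∈ P,
          (if (fun i => p.1 * p.2 i - p'.1 * p'.2 i) = (0 : Fin d → F)
            then (Fintype.card F : ℂ) ^ d else 0) := by
    have h2 : ∀ z, (Complex.normSq (T χ E z) : ℂ)
        = ∑ p ∈ P, ∑ p' ∈ P,
            χ (∑ i, z i * (p.1 * p.2 i - p'.1 * p'.2 i)) := by
      intro z
      rw [← Complex.mul_conj, T_prod, map_sum, Finset.sum_mul_sum]
      refine Finset.sum_congr rfl fun p _ => Finset.sum_congr rfl fun p' _ => ?_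
      rw [conj_char, ← AddChar.map_add_eq_mul]
      congr 1
      rw [Finset.mul_sum, Finset.mul_sum, ← sub_eq_add_neg, ← Finset.sum_sub_distrib]
      exact Finset.sum_congr rfl fun i _ => by ring
    simp_rw [h2]
    rw [Finset.sum_comm]
    refine Finset.sum_congr rfl fun p _ => ?_
    rw [Finset.sum_comm]
    refine Finset.sum_congr rfl fun p' _ => ?_
    exact orthV χ hχ _
  have keyR : ∑ z : Fin d → F, (Complex.normSq (T χ E z) : ℝ)
      = ∑ p ∈ P, ∑ p' ∈ P,
          (if (fun i => p.1 * p.2 i - p'.1 * p'.2 i) = (0 : Fin d → F)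
            then (Fintype.card F : ℝ) ^ d else 0) := by
    apply Complex.ofReal_injective
    push_cast
    rw [key]
    refine Finset.sum_congr rfl fun p _ => Finset.sum_congr rfl fun p' _ => ?_
    split_ifs <;> simp
  rw [keyR]
  have qd : (0:ℝ) ≤ (Fintype.card F : ℝ) ^ d := by positivity
  have step : ∀ p ∈ P, ∑ p' ∈ P,
      (if (fun i => p.1 * p.2 i - p'.1 * p'.2 i) = (0 : Fin d → F)
        then (Fintype.card F : ℝ) ^ d else 0)
      ≤ (Fintype.card F : ℝ) * (Fintype.card F : ℝ) ^ d := fun p _ =>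
    inner_count E _ qd (fun i => p.1 * p.2 i)
  calc ∑ p ∈ P, ∑ p' ∈ P, _ ≤ ∑ _p ∈ P, (Fintype.card F : ℝ) * (Fintype.card F : ℝ) ^ d :=
      Finset.sum_le_sum step
    _ = P.card * ((Fintype.card F : ℝ) * (Fintype.card F : ℝ) ^ d) := by
        rw [Finset.sum_const, nsmul_eq_mul]
    _ ≤ ((Fintype.card F : ℝ) * E.card) * ((Fintype.card F : ℝ) * (Fintype.card F : ℝ) ^ d) := by
        apply mul_le_mul_of_nonneg_right _ (by positivity)
        rw [hP, Finset.card_product]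
        push_cast
        apply mul_le_mul_of_nonneg_right _ (by positivity)
        exact_mod_cast Nat.cast_le.mpr ((Finset.card_erase_le).trans (le_of_eq Finset.card_univ))
    _ = (Fintype.card F : ℝ) ^ d * (Fintype.card F : ℝ) ^ 2 * E.card := by ring

lemma sumTE (χ : AddChar F ℂ) (E : Finset (Fin d → F)) :
    ∑ x ∈ E, ∑ x' ∈ E, T χ E (x - x')
      = ∑ p ∈ ((univ : Finset F).erase 0) ×ˢ E,
          (Complex.normSq (S χ E (fun i => p.1 * p.2 i)) : ℂ) := by
  have h1 : ∀ x x' : Fin d → F, T χ E (x - x')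
      = ∑ p ∈ ((univ : Finset F).erase 0) ×ˢ E,
          χ (∑ i, x i * (p.1 * p.2 i)) * χ (-(∑ i, x' i * (p.1 * p.2 i))) := by
    intro x x'
    rw [T_prod]
    refine Finset.sum_congr rfl fun p _ => ?_
    rw [← AddChar.map_add_eq_mul]
    congr 1
    rw [Finset.mul_sum, ← sub_eq_add_neg, ← Finset.sum_sub_distrib]
    refine Finset.sum_congr rfl fun i _ => ?_
    simp only [Pi.sub_apply]
    ring
  rw [Finset.sum_congr rfl fun x (_ : x ∈ E) => Finset.sum_congr rfl
    fun x' (_ : x' ∈ E) => h1 x x']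
  rw [Finset.sum_congr rfl fun x (_ : x ∈ E) => Finset.sum_comm, Finset.sum_comm]
  refine Finset.sum_congr rfl fun p _ => ?_
  have h2 : ∑ x ∈ E, ∑ x' ∈ E,
        χ (∑ i, x i * (p.1 * p.2 i)) * χ (-(∑ i, x' i * (p.1 * p.2 i)))
      = (∑ x ∈ E, χ (∑ i, x i * (p.1 * p.2 i)))
        * ∑ x' ∈ E, χ (-(∑ i, x' i * (p.1 * p.2 i))) := by
    rw [Finset.sum_mul_sum]
  rw [h2]
  have h3 : (∑ x' ∈ E, χ (-(∑ i, x' i * (p.1 * p.2 i))))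
      = (starRingEnd ℂ) (S χ E (fun i => p.1 * p.2 i)) := (conj_S χ E _).symm
  rw [h3]
  have h4 : (∑ x ∈ E, χ (∑ i, x i * (p.1 * p.2 i)))
      = S χ E (fun i => p.1 * p.2 i) := rfl
  rw [h4, Complex.mul_conj]

lemma sumR_le (χ : AddChar F ℂ) (hχ : χ.IsPrimitive) (E : Finset (Fin d → F)) :
    ∑ x ∈ E, ∑ x' ∈ E, ((Fintype.card F : ℝ) * (nu E (x - x') : ℝ) - E.card)
      ≤ (Fintype.card F : ℝ) * ((Fintype.card F : ℝ) ^ d * E.card) := by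
  have hT : ∀ z : Fin d → F,
      ((Fintype.card F : ℂ) * (nu E z : ℂ) - (E.card : ℂ)) = T χ E z := by
    intro z
    rw [T_real χ hχ E z]
    push_cast
    ring
  have hreal : ∑ x ∈ E, ∑ x' ∈ E,
        ((Fintype.card F : ℝ) * (nu E (x - x') : ℝ) - E.card)
      = ∑ p ∈ ((univ : Finset F).erase 0) ×ˢ E,
          Complex.normSq (S χ E (fun i => p.1 * p.2 i)) := by
    have hc : ((∑ x ∈ E, ∑ x' ∈ E,
          ((Fintype.card F : ℝ) * (nu E (x - x') : ℝ) - E.card) : ℝ) : ℂ)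
        = ((∑ p ∈ ((univ : Finset F).erase 0) ×ˢ E,
            Complex.normSq (S χ E (fun i => p.1 * p.2 i)) : ℝ) : ℂ) := by
      push_cast
      calc ∑ x ∈ E, ∑ x' ∈ E,
            ((Fintype.card F : ℂ) * (nu E (x - x') : ℂ) - (E.card : ℂ))
          = ∑ x ∈ E, ∑ x' ∈ E, T χ E (x - x') :=
            Finset.sum_congr rfl fun x _ => Finset.sum_congr rfl fun x' _ =>
              hT (x - x')
        _ = ∑ p ∈ ((univ : Finset F).erase 0) ×ˢ E,
            (Complex.normSq (S χ E (fun i => p.1 * p.2 i)) : ℂ) := sumTE χ E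
    exact_mod_cast hc
  rw [hreal, Finset.sum_product
    (f := fun p : F × (Fin d → F) => Complex.normSq (S χ E fun i => p.1 * p.2 i))]
  calc ∑ t ∈ (univ : Finset F).erase 0, ∑ y ∈ E,
        Complex.normSq (S χ E (fun i => t * y i))
      ≤ (Fintype.card F : ℝ) * ∑ w : Fin d → F, Complex.normSq (S χ E w) :=
        fiber_smul E (fun w => Complex.normSq (S χ E w))
          (fun w => Complex.normSq_nonneg _)
    _ = (Fintype.card F : ℝ) * ((Fintype.card F : ℝ) ^ d * E.card) := by
        rw [parseval χ hχ E]

lemma nu_eq (E : Finset (Fin d → F)) (x x' : Fin d → F) :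
    ((nu E (x - x') : ℝ))
      = ∑ u ∈ E, (if ∑ i, x i * u i = ∑ i, x' i * u i then (1:ℝ) else 0) := by
  rw [Finset.sum_boole, nu]
  refine congrArg _ (congrArg Finset.card (Finset.filter_congr ?_))
  intro u _
  simp only [Pi.sub_apply]
  rw [Finset.sum_congr rfl fun i (_ : i ∈ univ) => (by ring :
    (x i - x' i) * u i = x i * u i - x' i * u i), Finset.sum_sub_distrib,
    sub_eq_zero]

lemma comb (E : Finset (Fin d → F)) (k : ℕ) :
    ∑ y ∈ Fintype.piFinset (fun _ : Fin k => E), ∑ s : Fin k → F,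
        ((E.filter (fun x : Fin d → F => ∀ j, ∑ i, x i * y j i = s j)).card : ℝ) ^ 2
      = ∑ x ∈ E, ∑ x' ∈ E, ((nu E (x - x') : ℝ)) ^ k := by
  -- step 1: card as indicator sum, square as double sum
  have h1 : ∀ (y : Fin k → (Fin d → F)) (s : Fin k → F),
      ((E.filter (fun x : Fin d → F => ∀ j, ∑ i, x i * y j i = s j)).card : ℝ) ^ 2
        = ∑ x ∈ E, ∑ x' ∈ E,
            (if (∀ j, ∑ i, x i * y j i = s j) ∧ (∀ j, ∑ i, x' i * y j i = s j)
              then (1:ℝ) else 0) := by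
    intro y s
    rw [← Finset.sum_boole (p := fun x : Fin d → F => ∀ j, ∑ i, x i * y j i = s j)]
    rw [sq, Finset.sum_mul_sum]
    refine Finset.sum_congr rfl fun x _ => Finset.sum_congr rfl fun x' _ => ?_
    split_ifs with h h2 h3 <;> simp_all
  simp_rw [h1]
  -- step 2: move x, x' sums outside of the s sum
  have h2 : ∀ y : Fin k → (Fin d → F),
      ∑ s : Fin k → F, ∑ x ∈ E, ∑ x' ∈ E,
          (if (∀ j, ∑ i, x i * y j i = s j) ∧ (∀ j, ∑ i, x' i * y j i = s j)
            then (1:ℝ) else 0)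
        = ∑ x ∈ E, ∑ x' ∈ E,
            (if ∀ j, ∑ i, x i * y j i = ∑ i, x' i * y j i then (1:ℝ) else 0) := by
    intro y
    rw [Finset.sum_comm]
    refine Finset.sum_congr rfl fun x _ => ?_
    rw [Finset.sum_comm]
    refine Finset.sum_congr rfl fun x' _ => ?_
    -- inner sum over s
    have hiff : ∀ s : Fin k → F,
        ((∀ j, ∑ i, x i * y j i = s j) ∧ (∀ j, ∑ i, x' i * y j i = s j))
          ↔ ((∀ j, ∑ i, x i * y j i = ∑ i, x' i * y j i)
              ∧ s = fun j => ∑ i, x i * y j i) := by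
      intro s
      constructor
      · rintro ⟨ha, hb⟩
        exact ⟨fun j => (ha j).trans (hb j).symm, funext fun j => (ha j).symm⟩
      · rintro ⟨h, rfl⟩
        exact ⟨fun j => rfl, fun j => (h j).symm⟩
    rw [Finset.sum_congr rfl fun s _ => if_congr (hiff s) rfl rfl]
    by_cases hA : ∀ j, ∑ i, x i * y j i = ∑ i, x' i * y j i
    · have hth : ∀ s : Fin k → F,
          (if ((∀ j, ∑ i, x i * y j i = ∑ i, x' i * y j i)
              ∧ s = fun j => ∑ i, x i * y j i) then (1:ℝ) else 0)
            = (if s = (fun j => ∑ i, x i * y j i) then (1:ℝ) else 0) := fun s =>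
        if_congr (and_iff_right hA) rfl rfl
      rw [Finset.sum_congr rfl fun s _ => hth s,
        Finset.sum_ite_eq' univ (fun j => ∑ i, x i * y j i) (fun _ => (1:ℝ)),
        if_pos (Finset.mem_univ _), if_pos hA]
    · simp [hA]
  rw [Finset.sum_congr rfl fun y _ => h2 y]
  -- step 3: move x, x' outside of the y sum
  rw [Finset.sum_comm]
  refine Finset.sum_congr rfl fun x _ => ?_
  rw [Finset.sum_comm]
  refine Finset.sum_congr rfl fun x' _ => ?_
  -- step 4: the y sum factors as a k-th power
  have h3 : ∀ y : Fin k → (Fin d → F),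
      (if ∀ j, ∑ i, x i * y j i = ∑ i, x' i * y j i then (1:ℝ) else 0)
        = ∏ j : Fin k,
            (if ∑ i, x i * y j i = ∑ i, x' i * y j i then (1:ℝ) else 0) := by
    intro y
    rw [Finset.prod_boole]
    simp
  rw [Finset.sum_congr rfl fun y _ => h3 y]
  rw [Finset.sum_prod_piFinset E (fun (_ : Fin k) (u : Fin d → F) =>
    if ∑ i, x i * u i = ∑ i, x' i * u i then (1:ℝ) else 0)]
  rw [Finset.prod_congr rfl fun j (_ : j ∈ univ) => (nu_eq E x x').symm]
  rw [Finset.prod_const]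
  simp

lemma core (E : Finset (Fin d → F)) (k : ℕ)
    (n : (Fin d → F) → ℝ) (hn0 : ∀ z, 0 ≤ n z) (hne : ∀ z, n z ≤ E.card)
    (hF3 : ∑ z : Fin d → F, ((Fintype.card F : ℝ) * n z - E.card) ^ 2
      ≤ (Fintype.card F : ℝ) ^ d * (Fintype.card F : ℝ) ^ 2 * E.card)
    (hF4 : ∑ x ∈ E, ∑ x' ∈ E, ((Fintype.card F : ℝ) * n (x - x') - E.card)
      ≤ (Fintype.card F : ℝ) * ((Fintype.card F : ℝ) ^ d * E.card))
    (hfib : ∀ f : (Fin d → F) → ℝ, (∀ w, 0 ≤ f w) →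
      ∑ x ∈ E, ∑ x' ∈ E, f (x - x') ≤ (E.card : ℝ) * ∑ z : Fin d → F, f z) :
    ∑ x ∈ E, ∑ x' ∈ E, n (x - x') ^ k
      ≤ (2 ^ k + 1) * ((Fintype.card F : ℝ)⁻¹ ^ k * (E.card : ℝ) ^ (k + 2)
          + (Fintype.card F : ℝ) ^ d * (E.card : ℝ) ^ k) := by
  set Q : ℝ := (Fintype.card F : ℝ) with hQdef
  set e : ℝ := (E.card : ℝ) with hedef
  have hQ1 : 1 ≤ Q := by
    rw [hQdef]
    exact_mod_cast Fintype.card_pos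
  have hQ0 : 0 < Q := zero_lt_one.trans_le hQ1
  have he0 : 0 ≤ e := by rw [hedef]; positivity
  have hQd : (0:ℝ) ≤ Q ^ d := by positivity
  -- multiplied form
  have main : ∑ x ∈ E, ∑ x' ∈ E, (Q * n (x - x')) ^ k
      ≤ (2 ^ k + 1) * (e ^ (k + 2) + Q ^ k * Q ^ d * e ^ k) := by
    match k with
    | 0 =>
      simp only [pow_zero, mul_one, one_mul]
      rw [Finset.sum_congr rfl fun x _ => Finset.sum_const 1, Finset.sum_const]
      simp only [nsmul_eq_mul, mul_one]
      have h1 : (E.card : ℝ) * (E.card : ℝ) = e ^ 2 := by rw [hedef]; ring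
      rw [h1]
      have h2 : e ^ (0 + 2) = e ^ 2 := by norm_num
      rw [h2]
      nlinarith [hQd, sq_nonneg e]
    | 1 =>
      have expand : ∀ z, Q * n z = e + (Q * n z - e) := fun z => by ring
      simp only [pow_one]
      rw [Finset.sum_congr rfl fun x _ => Finset.sum_congr rfl fun x' _ =>
        expand (x - x')]
      rw [Finset.sum_congr rfl fun x (_ : x ∈ E) => Finset.sum_add_distrib,
        Finset.sum_add_distrib]
      have hconst : ∑ x ∈ E, ∑ _x' ∈ E, e = e ^ 3 := by
        simp only [Finset.sum_const, nsmul_eq_mul]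
        rw [hedef]; ring
      rw [hconst]
      have h3 : e ^ (1 + 2) = e ^ 3 := by norm_num
      rw [h3]
      nlinarith [hF4, he0, hQ0.le, hQd, mul_nonneg (mul_nonneg hQ0.le hQd) he0,
        pow_nonneg he0 3]
    | (m + 2) =>
      -- pointwise bound
      have pw : ∀ z, (Q * n z) ^ (m + 2)
          ≤ 2 ^ (m + 2) * (e ^ (m + 2) + (Q * e) ^ m * (Q * n z - e) ^ 2) := by
        intro z
        set R : ℝ := Q * n z - e with hR
        have ha0 : 0 ≤ Q * n z := mul_nonneg hQ0.le (hn0 z)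
        have hRabs : |R| ≤ Q * e := by
          rw [abs_le]
          constructor
          · have : 0 ≤ Q * n z := ha0
            have he' : e ≤ Q * e := le_mul_of_one_le_left he0 hQ1
            nlinarith
          · have h1 : n z ≤ e := hne z
            have : Q * n z ≤ Q * e := mul_le_mul_of_nonneg_left h1 hQ0.le
            nlinarith [he0]
        have step1 : Q * n z ≤ e + |R| := by
          have : Q * n z = e + R := by rw [hR]; ring
          rw [this]
          exact add_le_add_right (le_abs_self R) e
        have step2 : e + |R| ≤ 2 * max e |R| := by
          have h1 : e ≤ max e |R| := le_max_left _ _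
          have h2 : |R| ≤ max e |R| := le_max_right _ _
          linarith
        have hmax0 : 0 ≤ max e |R| := le_trans he0 (le_max_left _ _)
        have step3 : (Q * n z) ^ (m + 2) ≤ (2 * max e |R|) ^ (m + 2) :=
          pow_le_pow_left₀ ha0 (step1.trans step2) _
        have step4 : (2 * max e |R|) ^ (m + 2)
            = 2 ^ (m + 2) * (max e |R|) ^ (m + 2) := by rw [mul_pow]
        have step5 : (max e |R|) ^ (m + 2) ≤ e ^ (m + 2) + |R| ^ (m + 2) := by
          rcases max_cases e |R| with ⟨h, _⟩ | ⟨h, _⟩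
          · rw [h]
            have : (0:ℝ) ≤ |R| ^ (m + 2) := by positivity
            linarith
          · rw [h]
            have : (0:ℝ) ≤ e ^ (m + 2) := by positivity
            linarith
        have step6 : |R| ^ (m + 2) ≤ (Q * e) ^ m * R ^ 2 := by
          have h1 : |R| ^ (m + 2) = |R| ^ m * |R| ^ 2 := by ring
          have h2 : |R| ^ m ≤ (Q * e) ^ m := pow_le_pow_left₀ (abs_nonneg R) hRabs m
          have h3 : |R| ^ 2 = R ^ 2 := sq_abs R
          rw [h1, h3]
          exact mul_le_mul_of_nonneg_right h2 (sq_nonneg R)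
        calc (Q * n z) ^ (m + 2) ≤ 2 ^ (m + 2) * (max e |R|) ^ (m + 2) := by
              rw [← step4]; exact step3
          _ ≤ 2 ^ (m + 2) * (e ^ (m + 2) + |R| ^ (m + 2)) := by
              apply mul_le_mul_of_nonneg_left step5 (by positivity)
          _ ≤ 2 ^ (m + 2) * (e ^ (m + 2) + (Q * e) ^ m * R ^ 2) := by
              apply mul_le_mul_of_nonneg_left _ (by positivity)
              linarith [step6]
      -- sum the pointwise bound
      have pw' : ∀ z, (Q * n z) ^ (m + 2)
          ≤ 2 ^ (m + 2) * e ^ (m + 2)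
            + (2 ^ (m + 2) * (Q * e) ^ m) * (Q * n z - e) ^ 2 := by
        intro z
        have := pw z
        nlinarith [this]
      have hsum1 : ∑ x ∈ E, ∑ x' ∈ E, (Q * n (x - x')) ^ (m + 2)
          ≤ ∑ x ∈ E, ∑ x' ∈ E,
              (2 ^ (m + 2) * e ^ (m + 2)
                + (2 ^ (m + 2) * (Q * e) ^ m) * (Q * n (x - x') - e) ^ 2) :=
        Finset.sum_le_sum fun x _ => Finset.sum_le_sum fun x' _ => pw' (x - x')
      have hsplit : ∑ x ∈ E, ∑ x' ∈ E,
            (2 ^ (m + 2) * e ^ (m + 2)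
              + (2 ^ (m + 2) * (Q * e) ^ m) * (Q * n (x - x') - e) ^ 2)
          = e * e * (2 ^ (m + 2) * e ^ (m + 2))
            + (2 ^ (m + 2) * (Q * e) ^ m)
              * ∑ x ∈ E, ∑ x' ∈ E, (Q * n (x - x') - e) ^ 2 := by
        rw [Finset.sum_congr rfl fun x (_ : x ∈ E) => Finset.sum_add_distrib,
          Finset.sum_add_distrib]
        congr 1
        · simp only [Finset.sum_const, nsmul_eq_mul, hedef]
          ring
        · simp only [Finset.mul_sum]
      have hfib2 : ∑ x ∈ E, ∑ x' ∈ E, (Q * n (x - x') - e) ^ 2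
          ≤ e * (Q ^ d * Q ^ 2 * e) := by
        calc ∑ x ∈ E, ∑ x' ∈ E, (Q * n (x - x') - e) ^ 2
            ≤ e * ∑ z : Fin d → F, (Q * n z - e) ^ 2 :=
              hfib (fun z => (Q * n z - e) ^ 2) (fun w => sq_nonneg _)
          _ ≤ e * (Q ^ d * Q ^ 2 * e) := mul_le_mul_of_nonneg_left hF3 he0
      have hc0 : (0:ℝ) ≤ 2 ^ (m + 2) * (Q * e) ^ m := by positivity
      calc ∑ x ∈ E, ∑ x' ∈ E, (Q * n (x - x')) ^ (m + 2)
          ≤ e * e * (2 ^ (m + 2) * e ^ (m + 2))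
            + (2 ^ (m + 2) * (Q * e) ^ m)
              * ∑ x ∈ E, ∑ x' ∈ E, (Q * n (x - x') - e) ^ 2 := by
            rw [← hsplit]; exact hsum1
        _ ≤ e * e * (2 ^ (m + 2) * e ^ (m + 2))
            + (2 ^ (m + 2) * (Q * e) ^ m) * (e * (Q ^ d * Q ^ 2 * e)) :=
            add_le_add_right (mul_le_mul_of_nonneg_left hfib2 hc0) _
        _ = 2 ^ (m + 2) * (e ^ (m + 2 + 2) + Q ^ (m + 2) * Q ^ d * e ^ (m + 2)) := by
            ring
        _ ≤ (2 ^ (m + 2) + 1) * (e ^ (m + 2 + 2) + Q ^ (m + 2) * Q ^ d * e ^ (m + 2)) := by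
            have hb : (0:ℝ) ≤ e ^ (m + 2 + 2) + Q ^ (m + 2) * Q ^ d * e ^ (m + 2) := by
              positivity
            nlinarith [hb]
  -- conclude
  have hQk : Q⁻¹ ^ k * Q ^ k = 1 := by
    rw [← mul_pow, inv_mul_cancel₀ hQ0.ne', one_pow]
  have expand : ∑ x ∈ E, ∑ x' ∈ E, (Q * n (x - x')) ^ k
      = Q ^ k * ∑ x ∈ E, ∑ x' ∈ E, n (x - x') ^ k := by
    simp only [mul_pow, ← Finset.mul_sum]
  rw [expand] at main
  calc ∑ x ∈ E, ∑ x' ∈ E, n (x - x') ^ k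
      = Q⁻¹ ^ k * (Q ^ k * ∑ x ∈ E, ∑ x' ∈ E, n (x - x') ^ k) := by
        rw [← mul_assoc, hQk, one_mul]
    _ ≤ Q⁻¹ ^ k * ((2 ^ k + 1) * (e ^ (k + 2) + Q ^ k * Q ^ d * e ^ k)) := by
        apply mul_le_mul_of_nonneg_left main (by positivity)
    _ = (2 ^ k + 1) * ((Q⁻¹ ^ k * e ^ (k + 2)) + Q ^ d * e ^ k) := by
        have h5 : Q⁻¹ ^ k * ((2 ^ k + 1) * (e ^ (k + 2) + Q ^ k * Q ^ d * e ^ k))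
            = (2 ^ k + 1) * (Q⁻¹ ^ k * e ^ (k + 2)
                + (Q⁻¹ ^ k * Q ^ k) * (Q ^ d * e ^ k)) := by ring
        rw [h5, hQk, one_mul]

end Stmt19

open Finset

/-- `k`-star dot product counting: there is `C > 0` (depending only on `d, k`)
with `∑_{y¹,…,yᵏ ∈ E} ∑_{s₁,…,s_k} η_{y¹,…,yᵏ}(s₁,…,s_k)²
≤ C (q^{-k}|E|^{k+2} + q^d|E|^k)`. -/
theorem stmt_19 (d k : ℕ) :
    ∃ C : ℝ, 0 < C ∧
      ∀ (F : Type) [Field F] [Fintype F] [DecidableEq F],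
        ∀ E : Finset (Fin d → F),
          ∑ y ∈ Fintype.piFinset (fun _ : Fin k => E), ∑ s : Fin k → F,
              ((E.filter (fun x : Fin d → F =>
                  ∀ j, ∑ i, x i * y j i = s j)).card : ℝ) ^ 2
            ≤ C * ((Fintype.card F : ℝ)⁻¹ ^ k * (E.card : ℝ) ^ (k + 2)
                + (Fintype.card F : ℝ) ^ d * (E.card : ℝ) ^ k) := by
  refine ⟨2 ^ k + 1, by positivity, ?_⟩
  intro F _ _ _ E
  rw [Stmt19.comb E k]
  set χ : AddChar F ℂ := AddChar.FiniteField.primitiveChar_to_Complex F with hχdef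
  have hχ : χ.IsPrimitive := AddChar.FiniteField.primitiveChar_to_Complex_isPrimitive F
  apply Stmt19.core E k (fun z => (Stmt19.nu E z : ℝ))
  · intro z
    positivity
  · intro z
    exact_mod_cast Nat.cast_le.mpr (Finset.card_filter_le E _)
  · have h1 : ∀ z : Fin d → F,
        ((Fintype.card F : ℝ) * (Stmt19.nu E z : ℝ) - E.card) ^ 2
          = (Complex.normSq (Stmt19.T χ E z) : ℝ) := fun z =>
      (Stmt19.normSq_T χ hχ E z).symm
    rw [Finset.sum_congr rfl fun z _ => h1 z]
    exact Stmt19.sumT_le χ hχ E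
  · exact Stmt19.sumR_le χ hχ E
  · exact Stmt19.fiber_sub E
end
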